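/- arXiv:1702.03869 — 6 statements merged into one kernel-verified Lean document; each statement's English description precedes it below -/
import Mathlib

section
/- ∑_{n=1}^∞ (1/n³) ∑_{k=1}^n (-1)^{k-1}/k = (7/4)ζ(3)ln 2 − (5/16)ζ(4). -/
open Real Filter

/-- Generalized harmonic number `H_n^(m) = ∑_{j=1}^n 1/j^m`. -/
noncomputable def H (m n : ℕ) : ℝ := ∑ j ∈ Finset.range n, 1 / ((j : ℝ) + 1) ^ m

/-- Riemann zeta value `ζ(r) = ∑_{n=1}^∞ 1/n^r`. -/
noncomputable def zt (r : ℕ) : ℝ := ∑' n : ℕ, 1 / ((n : ℝ) + 1) ^ r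

/-- Polylogarithm `Li_p(x)`, with `Li_1(x) = -log(1-x)`. -/
noncomputable def Li (p : ℕ) (x : ℝ) : ℝ :=
  if p = 1 then -Real.log (1 - x) else ∑' n : ℕ, x ^ (n + 1) / ((n : ℝ) + 1) ^ p

open MeasureTheory Set

lemma summable_zt (p : ℕ) (hp : 2 ≤ p) : Summable (fun n : ℕ => 1 / ((n:ℝ)+1)^p) := by
  have := (Real.summable_one_div_nat_pow (p := p)).mpr hp
  simpa using (summable_nat_add_iff 1).mpr this

lemma summable_eta (p : ℕ) (hp : 2 ≤ p) : Summable (fun n : ℕ => (-1:ℝ)^(n+1) / ((n:ℝ)+1)^p) := by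
  refine (summable_zt p hp).of_norm_bounded (fun n => ?_)
  have h1 : (0:ℝ) < (n:ℝ)+1 := by positivity
  rw [norm_div, norm_pow, norm_neg, norm_one, one_pow, Real.norm_eq_abs,
    abs_of_pos (pow_pos h1 p)]

lemma summable_odd (p : ℕ) (hp : 2 ≤ p) : Summable (fun k : ℕ => 1 / (2*(k:ℝ)+1)^p) := by
  refine (summable_zt p hp).of_nonneg_of_le (fun k => by positivity) (fun k => ?_)
  have h2 : ((k:ℝ)+1)^p ≤ (2*(k:ℝ)+1)^p := by
    apply pow_le_pow_left₀ (by positivity); linarith [Nat.cast_nonneg (α := ℝ) k]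
  exact one_div_le_one_div_of_le (by positivity) h2

lemma eta_eq (p : ℕ) (hp : 2 ≤ p) :
    ∑' n : ℕ, (-1:ℝ)^(n+1) / ((n:ℝ)+1)^p = -((1 - 2 * ((2:ℝ)^p)⁻¹) * zt p) := by
  have hz := summable_zt p hp
  have hA := summable_odd p hp
  set g : ℕ → ℝ := fun n => 1 / ((n:ℝ)+1)^p with hg
  set f : ℕ → ℝ := fun n => (-1:ℝ)^(n+1) / ((n:ℝ)+1)^p with hf
  have hBval : ∀ k : ℕ, g (2*k+1) = ((2:ℝ)^p)⁻¹ * g k := by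
    intro k
    have : ((2*k+1:ℕ):ℝ) + 1 = 2 * ((k:ℝ)+1) := by push_cast; ring
    simp only [hg, this, mul_pow]
    field_simp
  have hge : ∀ k : ℕ, g (2*k) = 1 / (2*(k:ℝ)+1)^p := by
    intro k; simp only [hg]; push_cast; ring_nf
  have hfe : ∀ k : ℕ, f (2*k) = -(1 / (2*(k:ℝ)+1)^p) := by
    intro k; simp only [hf]; push_cast
    rw [pow_succ, pow_mul]; ring_nf
  have hfo : ∀ k : ℕ, f (2*k+1) = g (2*k+1) := by
    intro k; simp only [hf, hg]; push_cast
    rw [pow_succ, pow_succ, pow_mul]; ring_nf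
  have hBsum : Summable (fun k => g (2*k+1)) := by
    simpa only [hBval] using hz.mul_left ((2:ℝ)^p)⁻¹
  have hAsum : Summable (fun k => g (2*k)) := by
    simpa only [hge] using hA
  have hzsplit : (∑' k, g (2*k)) + (∑' k, g (2*k+1)) = zt p :=
    tsum_even_add_odd hAsum hBsum
  have hfsplit : (∑' k, f (2*k)) + (∑' k, f (2*k+1)) = ∑' n, f n :=
    tsum_even_add_odd (by simpa only [hfe] using hA.neg) (by simpa only [hfo] using hBsum)
  have hB : (∑' k, g (2*k+1)) = ((2:ℝ)^p)⁻¹ * zt p := by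
    simp only [hBval]; rw [tsum_mul_left]; rfl
  have hfA : (∑' k, f (2*k)) = -∑' k, g (2*k) := by
    simp only [hfe, hge]; exact tsum_neg
  have hfB : (∑' k, f (2*k+1)) = ∑' k, g (2*k+1) := by simp only [hfo]
  set A := ∑' k, g (2*k) with hA2
  set B := ∑' k, g (2*k+1) with hB2
  rw [← hfsplit, hfA, hfB]
  have hAv : A = zt p - B := by linarith [hzsplit]
  rw [hAv, hB]; ring

lemma zt_val (r : ℕ) (v : ℝ) (h : HasSum (fun n : ℕ => (1:ℝ) / (n : ℝ) ^ r) v) (hr : r ≠ 0) :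
    zt r = v := by
  have hs := h.summable
  have h0 := Summable.tsum_eq_zero_add hs
  rw [h.tsum_eq] at h0
  have : (∑' n : ℕ, (1:ℝ) / ((n+1 : ℕ) : ℝ) ^ r) = zt r := by
    apply tsum_congr; intro n; push_cast; ring
  rw [this] at h0
  rw [h0]; simp [zero_pow hr]

lemma zt_two : zt 2 = π^2/6 := zt_val 2 _ hasSum_zeta_two (by norm_num)
lemma zt_four : zt 4 = π^4/90 := zt_val 4 _ hasSum_zeta_four (by norm_num)

noncomputable def Pl (p : ℕ) (x : ℝ) : ℝ := ∑' n : ℕ, (-x)^(n+1)/((n:ℝ)+1)^p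

lemma summable_Pl (p : ℕ) (hp : 2 ≤ p) {x : ℝ} (hx : |x| ≤ 1) :
    Summable (fun n : ℕ => (-x)^(n+1)/((n:ℝ)+1)^p) := by
  refine (summable_zt p hp).of_norm_bounded (fun n => ?_)
  have h1 : (0:ℝ) < (n:ℝ)+1 := by positivity
  rw [norm_div, norm_pow, Real.norm_eq_abs, Real.norm_eq_abs, abs_of_pos (pow_pos h1 p), abs_neg]
  gcongr
  · exact pow_le_one₀ (abs_nonneg x) hx


lemma Pl_zero (p : ℕ) : Pl p 0 = 0 := by
  simp [Pl]

lemma continuousOn_Pl (p : ℕ) (hp : 2 ≤ p) : ContinuousOn (Pl p) (Icc (-1) 1) := by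
  refine continuousOn_tsum (fun n => (Continuous.continuousOn (by continuity))) (summable_zt p hp)
    (fun n x hx => ?_)
  have h1 : (0:ℝ) < (n:ℝ)+1 := by positivity
  rw [norm_div, norm_pow, Real.norm_eq_abs, Real.norm_eq_abs, abs_of_pos (pow_pos h1 p), abs_neg]
  gcongr
  · exact pow_le_one₀ (abs_nonneg x) (abs_le.mpr ⟨hx.1, hx.2⟩)


lemma hasDerivAt_Pl (p : ℕ) (hp : 2 ≤ p) {x : ℝ} (hx : x ∈ Ioo (0:ℝ) 1) :
    HasDerivAt (Pl p) (∑' n : ℕ, -(-x)^n/((n:ℝ)+1)^(p-1)) x := by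
  obtain ⟨hx0, hx1⟩ := hx
  set r : ℝ := (x+1)/2 with hr
  have hr1 : r < 1 := by rw [hr]; linarith
  have hr0 : 0 < r := by rw [hr]; linarith
  have hxr : x < r := by rw [hr]; linarith
  set g : ℕ → ℝ → ℝ := fun n y => (-y)^(n+1)/((n:ℝ)+1)^p with hg
  set g' : ℕ → ℝ → ℝ := fun n y => -(-y)^n/((n:ℝ)+1)^(p-1) with hg'
  have hderiv : ∀ n y, y ∈ Ioo (-r) r → HasDerivAt (g n) (g' n y) y := by
    intro n y _
    have h1 : HasDerivAt (fun y : ℝ => (-y)^(n+1)) (((n:ℝ)+1) * (-y)^n * (-1)) y := by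
      have h := (hasDerivAt_pow (n+1) (-y)).comp y (hasDerivAt_neg y)
      simp only [Function.comp_def] at h
      refine h.congr_deriv ?_
      push_cast
      ring
    have h2 := h1.div_const (((n:ℝ)+1)^p)
    refine h2.congr_deriv ?_
    have hpow : ((n:ℝ)+1)^p = ((n:ℝ)+1) * ((n:ℝ)+1)^(p-1) := by
      rw [← pow_succ']; congr 1; omega
    have h3 : ((n:ℝ)+1) ≠ 0 := by positivity
    have h4 : ((n:ℝ)+1)^(p-1) ≠ 0 := by positivity
    rw [hg', hpow]
    field_simp
  have hbound : ∀ n y, y ∈ Ioo (-r) r → ‖g' n y‖ ≤ r^n := by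
    intro n y hy
    have hy' : |y| ≤ r := by
      rw [abs_le]; exact ⟨(mem_Ioo.mp hy).1.le, (mem_Ioo.mp hy).2.le⟩
    have h1 : (1:ℝ) ≤ ((n:ℝ)+1)^(p-1) :=
      one_le_pow₀ (by linarith [Nat.cast_nonneg (α := ℝ) n])
    rw [hg']
    rw [norm_div, norm_neg, norm_pow, Real.norm_eq_abs, Real.norm_eq_abs, abs_neg,
      abs_of_pos (show (0:ℝ) < ((n:ℝ)+1)^(p-1) by positivity)]
    calc |y|^n / ((n:ℝ)+1)^(p-1) ≤ |y|^n / 1 := by gcongr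
      _ = |y|^n := div_one _
      _ ≤ r^n := pow_le_pow_left₀ (abs_nonneg y) hy' n
  have hsum0 : Summable (fun n => g n 0) := by
    have : (fun n : ℕ => g n 0) = fun _ => (0:ℝ) := by funext n; rw [hg]; simp
    rw [this]; exact summable_zero
  have key := hasDerivAt_tsum_of_isPreconnected
    (summable_geometric_of_lt_one hr0.le hr1) (isOpen_Ioo (a := -r) (b := r))
    (convex_Ioo _ _).isPreconnected hderiv hbound
    (mem_Ioo.mpr ⟨by linarith, hr0⟩) hsum0 (mem_Ioo.mpr ⟨by linarith, hxr⟩)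
  exact key

lemma hasDerivAt_Pl3 {x : ℝ} (hx : x ∈ Ioo (0:ℝ) 1) :
    HasDerivAt (Pl 3) (Pl 2 x / x) x := by
  have h := hasDerivAt_Pl 3 (by norm_num) hx
  have hx0 : x ≠ 0 := ne_of_gt hx.1
  convert h using 1
  have h1 : Pl 2 x = -x * ∑' n : ℕ, (-x)^n/((n:ℝ)+1)^2 := by
    rw [Pl, ← tsum_mul_left]
    exact tsum_congr (fun n => by rw [pow_succ']; ring)
  rw [h1]
  rw [show (3-1 : ℕ) = 2 from rfl]
  rw [show (∑' n : ℕ, -(-x)^n/((n:ℝ)+1)^2) = -∑' n : ℕ, (-x)^n/((n:ℝ)+1)^2 by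
    rw [← tsum_neg]; exact tsum_congr (fun n => by ring)]
  field_simp

lemma hasDerivAt_Pl2 {x : ℝ} (hx : x ∈ Ioo (0:ℝ) 1) :
    HasDerivAt (Pl 2) (-Real.log (1+x) / x) x := by
  have h := hasDerivAt_Pl 2 (by norm_num) hx
  have hx0 : x ≠ 0 := ne_of_gt hx.1
  convert h using 1
  have habs : |(-x)| < 1 := by rw [abs_neg, abs_of_pos hx.1]; exact hx.2
  have hlog := (Real.hasSum_pow_div_log_of_abs_lt_one habs).tsum_eq
  have h1 : (∑' n : ℕ, (-x)^(n+1)/((n:ℝ)+1)) = -x * ∑' n : ℕ, (-x)^n/((n:ℝ)+1) := by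
    rw [← tsum_mul_left]
    exact tsum_congr (fun n => by rw [pow_succ']; ring)
  have h2 : (∑' n : ℕ, (-x)^(n+1)/((n:ℝ)+1)) = -Real.log (1+x) := by
    rw [hlog, sub_neg_eq_add]
  have hT : (∑' n : ℕ, (-x)^n/((n:ℝ)+1)) = Real.log (1+x) / x := by
    have h3 : -x * (∑' n : ℕ, (-x)^n/((n:ℝ)+1)) = -Real.log (1+x) := h1 ▸ h2
    field_simp at h3 ⊢
    linarith
  rw [show (2-1 : ℕ) = 1 from rfl]
  rw [show (∑' n : ℕ, -(-x)^n/((n:ℝ)+1)^1) = -∑' n : ℕ, (-x)^n/((n:ℝ)+1) by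
    rw [← tsum_neg]; exact tsum_congr (fun n => by rw [pow_one]; ring)]
  rw [hT]
  ring

lemma contOn_Pl_unit (p : ℕ) (hp : 2 ≤ p) : ContinuousOn (Pl p) (Icc (0:ℝ) 1) :=
  (continuousOn_Pl p hp).mono (fun x hx => ⟨by linarith [hx.1], hx.2⟩)

lemma integral_Pl3 :
    ∫ x in (0:ℝ)..1, Pl 3 x / (1+x)
      = Real.log 2 * Pl 3 1 + (Pl 2 1)^2/2 := by
  set G : ℝ → ℝ := fun x => Real.log (1+x) * Pl 3 x + (Pl 2 x)^2/2 with hG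
  have hcont : ContinuousOn G (Icc (0:ℝ) 1) := by
    apply ContinuousOn.add
    · exact (ContinuousOn.log (by fun_prop) (fun x hx => by simp; linarith [hx.1])).mul
        (contOn_Pl_unit 3 (by norm_num))
    · exact ((contOn_Pl_unit 2 (by norm_num)).pow 2).div_const 2
  have hderiv : ∀ x ∈ Ioo (0:ℝ) 1, HasDerivAt G (Pl 3 x / (1+x)) x := by
    intro x hx
    have hx0 : x ≠ 0 := ne_of_gt hx.1
    have h1x : (1:ℝ) + x ≠ 0 := by linarith [hx.1]
    have hlog : HasDerivAt (fun y : ℝ => Real.log (1+y)) (1/(1+x)) x := by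
      have h := ((hasDerivAt_id x).const_add 1).log h1x
      simpa using h
    have h3 := hasDerivAt_Pl3 hx
    have h2 := hasDerivAt_Pl2 hx
    have hcomb := (hlog.mul h3).add (((h2.pow 2)).div_const 2)
    refine hcomb.congr_deriv ?_
    rw [show (2-1 : ℕ) = 1 from rfl]
    field_simp
    ring
  have hint : IntervalIntegrable (fun x => Pl 3 x / (1+x)) volume 0 1 := by
    apply ContinuousOn.intervalIntegrable
    rw [Set.uIcc_of_le (by norm_num : (0:ℝ) ≤ 1)]
    exact (contOn_Pl_unit 3 (by norm_num)).div (by fun_prop)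
      (fun x hx => by intro h; linarith [hx.1])
  have := intervalIntegral.integral_eq_sub_of_hasDerivAt_of_le (by norm_num : (0:ℝ) ≤ 1)
    hcont hderiv hint
  rw [this, hG]
  norm_num [Pl_zero]

lemma integral_inv_one_add :
    ∫ x in (0:ℝ)..1, 1 / (1+x) = Real.log 2 := by
  have hderiv : ∀ x ∈ Ioo (0:ℝ) 1, HasDerivAt (fun y : ℝ => Real.log (1+y)) (1/(1+x)) x := by
    intro x hx
    have h1x : (1:ℝ) + x ≠ 0 := by linarith [hx.1]
    simpa using ((hasDerivAt_id x).const_add 1).log h1x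
  have hint : IntervalIntegrable (fun x : ℝ => 1 / (1+x)) volume 0 1 := by
    apply ContinuousOn.intervalIntegrable
    rw [Set.uIcc_of_le (by norm_num : (0:ℝ) ≤ 1)]
    exact ContinuousOn.div continuousOn_const (by fun_prop)
      (fun x hx => by intro h; linarith [hx.1])
  have hcont : ContinuousOn (fun y : ℝ => Real.log (1+y)) (Icc (0:ℝ) 1) :=
    ContinuousOn.log (by fun_prop) (fun x hx => by simp; linarith [hx.1])
  have := intervalIntegral.integral_eq_sub_of_hasDerivAt_of_le (by norm_num : (0:ℝ) ≤ 1)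
    hcont hderiv hint
  rw [this]
  norm_num

noncomputable def phi (n : ℕ) (x : ℝ) : ℝ := 1/((n:ℝ)+1)^3 * ((1 - (-x)^(n+1))/(1+x))

lemma phi_integral (n : ℕ) :
    ∫ x in (0:ℝ)..1, phi n x
      = 1/((n:ℝ)+1)^3 * ∑ k ∈ Finset.range (n+1), (-1:ℝ)^k/((k:ℝ)+1) := by
  have heq : Set.EqOn (phi n)
      (fun x => 1/((n:ℝ)+1)^3 * ∑ k ∈ Finset.range (n+1), (-1:ℝ)^k * x^k)
      (Set.uIcc (0:ℝ) 1) := by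
    intro x hx
    rw [Set.uIcc_of_le (by norm_num : (0:ℝ) ≤ 1)] at hx
    have hxne : (-x) ≠ 1 := by intro h; linarith [hx.1]
    have hgeom := geom_sum_eq hxne (n+1)
    have h1x : (1:ℝ) + x ≠ 0 := by have := hx.1; intro h; linarith
    rw [phi]
    congr 1
    rw [show (∑ k ∈ Finset.range (n+1), (-1:ℝ)^k * x^k)
        = ∑ k ∈ Finset.range (n+1), (-x)^k by
      apply Finset.sum_congr rfl; intro k _; rw [neg_pow]; ring]
    rw [hgeom, div_eq_div_iff h1x (by intro h; apply h1x; linarith)]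
    ring
  rw [intervalIntegral.integral_congr heq]
  rw [intervalIntegral.integral_const_mul]
  congr 1
  rw [intervalIntegral.integral_finset_sum]
  · apply Finset.sum_congr rfl
    intro k _
    rw [intervalIntegral.integral_const_mul, integral_pow]
    norm_num [div_eq_mul_inv]
  · intro k _
    apply Continuous.intervalIntegrable
    continuity

lemma phi_bound (n : ℕ) {x : ℝ} (hx : x ∈ Set.Ioc (0:ℝ) 1) :
    ‖phi n x‖ ≤ 2/((n:ℝ)+1)^3 := by
  obtain ⟨hx0, hx1⟩ := hx
  have hy : |(-x)^(n+1)| ≤ 1 := by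
    rw [abs_pow, abs_neg, abs_of_pos hx0]; exact pow_le_one₀ hx0.le hx1
  have hy1 := (abs_le.mp hy).1
  have hy2 := (abs_le.mp hy).2
  have hnum : |1 - (-x)^(n+1)| ≤ 2 := by
    rw [abs_of_nonneg (by linarith)]; linarith
  have hden : (1:ℝ) ≤ |1+x| := by rw [abs_of_pos (by linarith)]; linarith
  rw [phi, norm_mul, Real.norm_eq_abs, Real.norm_eq_abs, abs_div, abs_div, abs_one,
    abs_of_pos (show (0:ℝ) < ((n:ℝ)+1)^3 by positivity)]
  calc 1/((n:ℝ)+1)^3 * (|1 - (-x)^(n+1)|/|1+x|)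
      ≤ 1/((n:ℝ)+1)^3 * (2/1) := by gcongr
    _ = 2/((n:ℝ)+1)^3 := by ring

lemma interchange :
    (∑' n : ℕ, (1 / ((n : ℝ) + 1) ^ 3 * ∑ k ∈ Finset.range (n + 1), (-1 : ℝ) ^ k / ((k : ℝ) + 1)))
      = ∫ x in (0:ℝ)..1, (zt 3 - Pl 3 x)/(1+x) := by
  set μ := volume.restrict (Set.Ioc (0:ℝ) 1) with hμ
  have hmeas : ∀ n : ℕ, AEStronglyMeasurable (phi n) μ := by
    intro n
    apply Measurable.aestronglyMeasurable
    unfold phi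
    apply Measurable.mul measurable_const
    exact (measurable_const.sub ((measurable_id.neg).pow_const _)).div
      (measurable_const.add measurable_id)
  have hfin : (∑' n : ℕ, ∫⁻ x, ‖phi n x‖₊ ∂μ) ≠ ⊤ := by
    have hb : ∀ n : ℕ, ∫⁻ x, ‖phi n x‖₊ ∂μ ≤ ENNReal.ofReal (2/((n:ℝ)+1)^3) := by
      intro n
      calc ∫⁻ x, ‖phi n x‖₊ ∂μ
          ≤ ∫⁻ _, ENNReal.ofReal (2/((n:ℝ)+1)^3) ∂μ := by
            refine lintegral_mono_ae ((ae_restrict_iff' measurableSet_Ioc).mpr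
              (Filter.Eventually.of_forall (fun x hx => ?_)))
            rw [← ENNReal.ofReal_coe_nnreal, coe_nnnorm]
            exact ENNReal.ofReal_le_ofReal (phi_bound n hx)
        _ = ENNReal.ofReal (2/((n:ℝ)+1)^3) * μ Set.univ := lintegral_const _
        _ ≤ ENNReal.ofReal (2/((n:ℝ)+1)^3) := by
            rw [hμ, Measure.restrict_apply_univ, Real.volume_Ioc]
            norm_num
    have hsum2 : Summable (fun n : ℕ => 2/((n:ℝ)+1)^3) := by
      have := (summable_zt 3 (by norm_num)).mul_left 2
      refine this.congr (fun n => by ring)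
    have hle : (∑' n : ℕ, ∫⁻ x, ‖phi n x‖₊ ∂μ)
        ≤ ENNReal.ofReal (∑' n : ℕ, 2/((n:ℝ)+1)^3) := by
      refine (ENNReal.tsum_le_tsum hb).trans_eq ?_
      exact (ENNReal.ofReal_tsum_of_nonneg (fun n => by positivity) hsum2).symm
    exact ne_top_of_le_ne_top ENNReal.ofReal_ne_top hle
  have key := integral_tsum hmeas hfin
  have hpt : Set.EqOn (fun x => ∑' n : ℕ, phi n x) (fun x => (zt 3 - Pl 3 x)/(1+x))
      (Set.Ioc (0:ℝ) 1) := by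
    intro x hx
    obtain ⟨hx0, hx1⟩ := hx
    have h1x : (1:ℝ) + x ≠ 0 := by linarith
    have habs : |x| ≤ 1 := by rw [abs_of_pos hx0]; exact hx1
    have hterm : ∀ n : ℕ, phi n x
        = (1/(1+x)) * (1/((n:ℝ)+1)^3 - (-x)^(n+1)/((n:ℝ)+1)^3) := by
      intro n; rw [phi]; ring
    simp only
    rw [tsum_congr hterm, tsum_mul_left,
      Summable.tsum_sub (summable_zt 3 (by norm_num)) (summable_Pl 3 (by norm_num) habs)]
    rw [show (∑' n : ℕ, 1/((n:ℝ)+1)^3) = zt 3 from rfl,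
      show (∑' n : ℕ, (-x)^(n+1)/((n:ℝ)+1)^3) = Pl 3 x from rfl]
    ring
  calc (∑' n : ℕ, (1 / ((n : ℝ) + 1) ^ 3 * ∑ k ∈ Finset.range (n + 1), (-1:ℝ)^k/((k:ℝ)+1)))
      = ∑' n : ℕ, ∫ x, phi n x ∂μ := by
        refine tsum_congr (fun n => ?_)
        rw [← phi_integral n, hμ, intervalIntegral.integral_of_le (by norm_num : (0:ℝ) ≤ 1)]
    _ = ∫ x, ∑' n : ℕ, phi n x ∂μ := key.symm
    _ = ∫ x in Set.Ioc (0:ℝ) 1, (zt 3 - Pl 3 x)/(1+x) := by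
        rw [hμ]
        exact setIntegral_congr_fun measurableSet_Ioc hpt
    _ = ∫ x in (0:ℝ)..1, (zt 3 - Pl 3 x)/(1+x) :=
        (intervalIntegral.integral_of_le (by norm_num : (0:ℝ) ≤ 1)).symm

theorem stmt3 :
    ∑' n : ℕ, (1 / ((n : ℝ) + 1) ^ 3 * ∑ k ∈ Finset.range (n + 1), (-1 : ℝ) ^ k / ((k : ℝ) + 1))
      = 7/4 * zt 3 * Real.log 2 - 5/16 * zt 4 := by
  rw [interchange]
  have hrw : ∀ x : ℝ, (zt 3 - Pl 3 x)/(1+x) = zt 3 * (1/(1+x)) - Pl 3 x/(1+x) := by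
    intro x; rw [sub_div, mul_one_div]
  simp_rw [hrw]
  have hint1 : IntervalIntegrable (fun x : ℝ => zt 3 * (1/(1+x))) volume 0 1 := by
    apply ContinuousOn.intervalIntegrable
    rw [Set.uIcc_of_le (by norm_num : (0:ℝ) ≤ 1)]
    exact continuousOn_const.mul (ContinuousOn.div continuousOn_const (by fun_prop)
      (fun x hx => by intro h; linarith [hx.1]))
  have hint2 : IntervalIntegrable (fun x : ℝ => Pl 3 x/(1+x)) volume 0 1 := by
    apply ContinuousOn.intervalIntegrable
    rw [Set.uIcc_of_le (by norm_num : (0:ℝ) ≤ 1)]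
    exact (contOn_Pl_unit 3 (by norm_num)).div (by fun_prop)
      (fun x hx => by intro h; linarith [hx.1])
  rw [intervalIntegral.integral_sub hint1 hint2, intervalIntegral.integral_const_mul,
    integral_inv_one_add, integral_Pl3]
  have hPl3 : Pl 3 1 = -(3/4 * zt 3) := by
    have h := eta_eq 3 (by norm_num)
    rw [show Pl 3 1 = ∑' n : ℕ, (-1:ℝ)^(n+1)/((n:ℝ)+1)^3 by rw [Pl], h]
    ring
  have hPl2 : Pl 2 1 = -(π^2/12) := by
    have h := eta_eq 2 (by norm_num)
    rw [show Pl 2 1 = ∑' n : ℕ, (-1:ℝ)^(n+1)/((n:ℝ)+1)^2 by rw [Pl], h, zt_two]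
    ring
  rw [hPl3, hPl2, zt_four]
  ring
end

section
/- For every real x with −1 < x < 1: ∑_{n=1}^∞ H_n H_n^{(2)} xⁿ = (1/(1−x)) · (2 Li₃(x) − ln(1−x) Li₂(x) − ∑_{n=1}^∞ (H_n/n²) xⁿ). -/
open Real Filter

lemma H_succ (m n : ℕ) : H m (n+1) = H m n + 1/((n:ℝ)+1)^m := by
  simp [H, Finset.sum_range_succ]

lemma H_zero (m : ℕ) : H m 0 = 0 := by simp [H]

lemma H_nonneg (m n : ℕ) : 0 ≤ H m n :=
  Finset.sum_nonneg fun j _ => by positivity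

lemma H_le (m n : ℕ) : H m n ≤ n := by
  calc H m n ≤ ∑ j ∈ Finset.range n, 1 := by
        refine Finset.sum_le_sum fun j _ => ?_
        rw [div_le_one (by positivity)]
        exact one_le_pow₀ (by linarith [Nat.cast_nonneg (α:=ℝ) j])
    _ = n := by simp

noncomputable def D (n : ℕ) : ℝ := H 2 n/((n:ℝ)+1) + 2*H 1 n/((n:ℝ)+1)^2

noncomputable def b (n : ℕ) : ℝ := 2/((n:ℝ)+1)^3 + D n - H 1 (n+1)/((n:ℝ)+1)^2

lemma frac_sum (n : ℕ) :
    ∑ p ∈ Finset.HasAntidiagonal.antidiagonal n, 1/((p.1:ℝ)+1) * (1/((p.2:ℝ)+1)^2)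
      = H 2 (n+1)/((n:ℝ)+2) + 2 * H 1 (n+1)/((n:ℝ)+2)^2 := by
  rw [Finset.Nat.sum_antidiagonal_eq_sum_range_succ_mk]
  have key : ∀ k ∈ Finset.range (n+1),
      1/((k:ℝ)+1) * (1/(((n-k:ℕ):ℝ)+1)^2)
        = (1/((n:ℝ)+2)) * (1/(((n-k:ℕ):ℝ)+1)^2)
          + ((1/((n:ℝ)+2)^2) * (1/(((n-k:ℕ):ℝ)+1))
          + (1/((n:ℝ)+2)^2) * (1/((k:ℝ)+1))) := by
    intro k hk
    rw [Finset.mem_range] at hk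
    rw [Nat.cast_sub (by omega)]
    have hkn : (k:ℝ) ≤ n := by exact_mod_cast Nat.le_of_lt_succ hk
    have h1 : (k:ℝ)+1 ≠ 0 := by positivity
    have h2 : (n:ℝ) - k + 1 ≠ 0 := by nlinarith
    have h3 : (n:ℝ)+2 ≠ 0 := by positivity
    field_simp
    ring
  rw [Finset.sum_congr rfl key, Finset.sum_add_distrib, Finset.sum_add_distrib,
    ← Finset.mul_sum, ← Finset.mul_sum, ← Finset.mul_sum]
  have E1 : ∑ k ∈ Finset.range (n+1), 1/(((n-k:ℕ):ℝ)+1)^2 = H 2 (n+1) := by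
    rw [H, ← Finset.sum_range_reflect (fun j => 1/((j:ℝ)+1)^2) (n+1)]
    simp only [Nat.add_sub_cancel]
  have E2 : ∑ k ∈ Finset.range (n+1), 1/(((n-k:ℕ):ℝ)+1) = H 1 (n+1) := by
    rw [show H 1 (n+1) = ∑ j ∈ Finset.range (n+1), 1/((j:ℝ)+1) by simp [H],
      ← Finset.sum_range_reflect (fun j => 1/((j:ℝ)+1)) (n+1)]
    simp only [Nat.add_sub_cancel]
  have E3 : ∑ k ∈ Finset.range (n+1), 1/((k:ℝ)+1) = H 1 (n+1) := by simp [H]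
  rw [E1, E2, E3]
  ring

lemma coeff_sum (n : ℕ) :
    ∑ j ∈ Finset.range (n+1), b j = H 1 (n+1) * H 2 (n+1) := by
  induction n with
  | zero => norm_num [b, D, H, Finset.sum_range_succ]
  | succ n ih =>
    rw [Finset.sum_range_succ, ih, b, D,
      H_succ 1 (n+1), H_succ 2 (n+1)]
    have h : ((n:ℝ)+1)+1 ≠ 0 := by positivity
    push_cast
    field_simp
    ring

theorem stmt5 (x : ℝ) (hx₁ : -1 < x) (hx₂ : x < 1) :
    ∑' n : ℕ, H 1 (n + 1) * H 2 (n + 1) * x ^ (n + 1)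
      = 1 / (1 - x) * (2 * Li 3 x - Real.log (1 - x) * Li 2 x
        - ∑' n : ℕ, H 1 (n + 1) / ((n : ℝ) + 1) ^ 2 * x ^ (n + 1)) := by
  have hx : |x| < 1 := abs_lt.2 ⟨hx₁, hx₂⟩
  -- summability machine
  have key : ∀ (C : ℝ) (k : ℕ) (f : ℕ → ℝ),
      (∀ n, |f n| ≤ C * ((n:ℝ)+1)^k * |x|^(n+1)) → Summable (fun n => ‖f n‖) := by
    intro C k f hf
    have h0 : Summable (fun n : ℕ => ((n:ℝ))^k * |x|^n) :=
      summable_pow_mul_geometric_of_norm_lt_one k (by rw [norm_eq_abs, abs_abs]; exact hx)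
    have h1 := (h0.comp_injective Nat.succ_injective).mul_left C
    have base : Summable (fun n : ℕ => C * ((n:ℝ)+1)^k * |x|^(n+1)) := by
      refine h1.congr fun n => ?_
      simp only [Function.comp]
      push_cast [pow_succ]
      ring
    exact Summable.of_nonneg_of_le (fun n => norm_nonneg _)
      (fun n => by rw [Real.norm_eq_abs]; exact hf n) base
  have hx1n : ∀ n : ℕ, (1:ℝ) ≤ ((n:ℝ)+1) := fun n => by
    linarith [Nat.cast_nonneg (α:=ℝ) n]
  have hxpos : ∀ n : ℕ, (0:ℝ) < ((n:ℝ)+1) := fun n => by positivity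
  -- norm-summability of all the series we use
  have nfp : ∀ p : ℕ, Summable (fun n : ℕ => ‖x^(n+1)/((n:ℝ)+1)^p‖) := by
    intro p
    refine key 1 0 _ fun n => ?_
    rw [abs_div, abs_pow, abs_pow]
    simp only [pow_zero, one_mul]
    have h1 : (1:ℝ) ≤ |(n:ℝ)+1|^p :=
      one_le_pow₀ (by rw [abs_of_pos (hxpos n)]; exact hx1n n)
    calc |x|^(n+1) / |(n:ℝ)+1|^p ≤ |x|^(n+1) / 1 := by
          apply div_le_div_of_nonneg_left (by positivity) one_pos h1
      _ = |x|^(n+1) := by ring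
  have hD_bound : ∀ n : ℕ, |D n| ≤ 3*((n:ℝ)+1) := by
    intro n
    have e1 : H 2 n/((n:ℝ)+1) ≤ (n:ℝ)+1 := by
      rw [div_le_iff₀ (hxpos n)]
      nlinarith [H_le 2 n, hx1n n, H_nonneg 2 n]
    have e2 : 2*H 1 n/((n:ℝ)+1)^2 ≤ 2*((n:ℝ)+1) := by
      rw [div_le_iff₀ (by positivity : (0:ℝ) < ((n:ℝ)+1)^2)]
      nlinarith [H_le 1 n, hx1n n, H_nonneg 1 n]
    have hDn : 0 ≤ D n := by
      have := H_nonneg 1 n; have := H_nonneg 2 n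
      have := hxpos n
      unfold D; positivity
    rw [abs_of_nonneg hDn]
    unfold D
    linarith
  have hT_bound : ∀ n : ℕ, |H 1 (n+1)/((n:ℝ)+1)^2| ≤ ((n:ℝ)+1) := by
    intro n
    have hH := H_le 1 (n+1)
    push_cast at hH
    rw [abs_of_nonneg (div_nonneg (H_nonneg 1 (n+1)) (by positivity))]
    rw [div_le_iff₀ (by positivity : (0:ℝ) < ((n:ℝ)+1)^2)]
    nlinarith [hx1n n, H_nonneg 1 (n+1)]
  have nD : Summable (fun n : ℕ => ‖D n * x^(n+1)‖) := by
    refine key 3 1 _ fun n => ?_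
    rw [abs_mul, abs_pow, pow_one]
    exact mul_le_mul_of_nonneg_right (hD_bound n) (by positivity)
  have nT : Summable (fun n : ℕ => ‖H 1 (n+1)/((n:ℝ)+1)^2 * x^(n+1)‖) := by
    refine key 1 1 _ fun n => ?_
    rw [abs_mul, abs_pow, pow_one, one_mul]
    exact mul_le_mul_of_nonneg_right (hT_bound n) (by positivity)
  have nb : Summable (fun n : ℕ => ‖b n * x^(n+1)‖) := by
    refine key 7 1 _ fun n => ?_
    rw [abs_mul, abs_pow, pow_one]
    have hb : |b n| ≤ 7*((n:ℝ)+1) := by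
      have t1 : |2/((n:ℝ)+1)^3| ≤ 2 := by
        rw [abs_div]
        rw [abs_of_pos (by positivity : (0:ℝ) < 2)]
        rw [div_le_iff₀ (by positivity : (0:ℝ) < |((n:ℝ)+1)^3|)]
        have : (1:ℝ) ≤ |((n:ℝ)+1)^3| := by
          rw [abs_of_pos (by positivity)]
          exact one_le_pow₀ (hx1n n)
        nlinarith
      have tri : |b n| ≤ |2/((n:ℝ)+1)^3| + |D n| + |H 1 (n+1)/((n:ℝ)+1)^2| := by
        unfold b
        calc |2/((n:ℝ)+1)^3 + D n - H 1 (n+1)/((n:ℝ)+1)^2|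
            ≤ |2/((n:ℝ)+1)^3 + D n| + |H 1 (n+1)/((n:ℝ)+1)^2| := abs_sub _ _
          _ ≤ |2/((n:ℝ)+1)^3| + |D n| + |H 1 (n+1)/((n:ℝ)+1)^2| := by
              have := abs_add_le (2/((n:ℝ)+1)^3) (D n); linarith
      have := hD_bound n; have := hT_bound n
      have := hx1n n
      linarith
    exact mul_le_mul_of_nonneg_right hb (by positivity)
  have ngeo : Summable (fun n : ℕ => ‖x^n‖) := by
    simpa [norm_eq_abs, abs_pow] using summable_geometric_of_lt_one (abs_nonneg x) hx
  have nLHS : Summable (fun n : ℕ => ‖H 1 (n+1) * H 2 (n+1) * x^(n+1)‖) := by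
    refine key 1 2 _ fun n => ?_
    rw [abs_mul, abs_mul, abs_pow, one_mul]
    have h1 := H_le 1 (n+1); have h2 := H_le 2 (n+1)
    push_cast at h1 h2
    have g1 : |H 1 (n+1)| ≤ (n:ℝ)+1 := by rw [abs_of_nonneg (H_nonneg 1 (n+1))]; linarith
    have g2 : |H 2 (n+1)| ≤ (n:ℝ)+1 := by rw [abs_of_nonneg (H_nonneg 2 (n+1))]; linarith
    have : |H 1 (n+1)| * |H 2 (n+1)| ≤ ((n:ℝ)+1)^2 := by
      nlinarith [abs_nonneg (H 1 (n+1)), abs_nonneg (H 2 (n+1))]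
    exact mul_le_mul_of_nonneg_right this (by positivity)
  -- closed forms
  have hLi2 : Li 2 x = ∑' n : ℕ, x^(n+1)/((n:ℝ)+1)^2 := by simp [Li]
  have hLi3 : Li 3 x = ∑' n : ℕ, x^(n+1)/((n:ℝ)+1)^3 := by simp [Li]
  have hgeo : ∑' n : ℕ, x^n = (1-x)⁻¹ := tsum_geometric_of_norm_lt_one (by rwa [norm_eq_abs])
  -- first Cauchy product : -log(1-x) * Li₂
  have c1 : (-Real.log (1-x)) * Li 2 x
      = ∑' n : ℕ, (H 2 (n+1)/((n:ℝ)+2) + 2 * H 1 (n+1)/((n:ℝ)+2)^2) * x^(n+2) := by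
    rw [← (hasSum_pow_div_log_of_abs_lt_one hx).tsum_eq, hLi2,
      tsum_mul_tsum_eq_tsum_sum_antidiagonal_of_summable_norm
        ((nfp 1).congr fun n => by rw [pow_one]) (nfp 2)]
    refine tsum_congr fun n => ?_
    rw [← frac_sum n, Finset.sum_mul]
    refine Finset.sum_congr rfl fun p hp => ?_
    rw [Finset.HasAntidiagonal.mem_antidiagonal] at hp
    have hxp : x^(p.1+1) * x^(p.2+1) = x^(n+2) := by rw [← pow_add]; congr 1; omega
    calc x^(p.1+1)/((p.1:ℝ)+1) * (x^(p.2+1)/((p.2:ℝ)+1)^2)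
        = x^(p.1+1) * x^(p.2+1) * (1/((p.1:ℝ)+1) * (1/((p.2:ℝ)+1)^2)) := by ring
      _ = 1/((p.1:ℝ)+1) * (1/((p.2:ℝ)+1)^2) * x^(n+2) := by rw [hxp]; ring
  have sD : Summable (fun n : ℕ => D n * x^(n+1)) := nD.of_norm
  have shift : ∑' n : ℕ, D n * x^(n+1)
      = ∑' n : ℕ, (H 2 (n+1)/((n:ℝ)+2) + 2 * H 1 (n+1)/((n:ℝ)+2)^2) * x^(n+2) := by
    rw [Summable.tsum_eq_zero_add sD]
    have h0 : D 0 * x^(0+1) = 0 := by simp [D, H_zero]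
    rw [h0, zero_add]
    refine tsum_congr fun n => ?_
    simp only [D]
    push_cast
    ring
  have hc1' : Real.log (1-x) * Li 2 x = -∑' n : ℕ, D n * x^(n+1) := by
    rw [shift, ← c1]; ring
  -- combine the three series
  have h2f3 : Summable (fun n : ℕ => 2*(x^(n+1)/((n:ℝ)+1)^3)) := ((nfp 3).of_norm).mul_left 2
  have sT : Summable (fun n : ℕ => H 1 (n+1)/((n:ℝ)+1)^2 * x^(n+1)) := nT.of_norm
  have hInner : 2 * Li 3 x - Real.log (1-x) * Li 2 x
      - (∑' n : ℕ, H 1 (n+1)/((n:ℝ)+1)^2 * x^(n+1)) = ∑' n : ℕ, b n * x^(n+1) := by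
    rw [hc1', hLi3, ← tsum_mul_left, sub_neg_eq_add,
      ← Summable.tsum_add h2f3 sD, ← Summable.tsum_sub (h2f3.add sD) sT]
    refine tsum_congr fun n => ?_
    simp only [b]
    ring
  -- second Cauchy product : divide by (1-x)
  have c2 : (∑' n : ℕ, b n * x^(n+1)) * (∑' n : ℕ, x^n)
      = ∑' n : ℕ, H 1 (n+1) * H 2 (n+1) * x^(n+1) := by
    rw [tsum_mul_tsum_eq_tsum_sum_antidiagonal_of_summable_norm nb ngeo]
    refine tsum_congr fun n => ?_
    rw [Finset.Nat.sum_antidiagonal_eq_sum_range_succ_mk]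
    have step : ∀ k ∈ Finset.range (n+1), b k * x^(k+1) * x^(n-k) = b k * x^(n+1) := by
      intro k hk
      rw [Finset.mem_range] at hk
      rw [mul_assoc, ← pow_add]
      congr 2
      omega
    rw [Finset.sum_congr rfl step, ← Finset.sum_mul, coeff_sum]
  rw [hInner, one_div, ← hgeo, ← c2]
  exact mul_comm _ _
end

section
/- For integers m ≥ 1 and real z ∈ [0,1]: ∫₀^z ln^m(1+x)/x dx = (1/(m+1)) ln^{m+1}(1+z) + m!·(ζ(m+1) − Li_{m+1}(1/(1+z))) − m!·∑_{j=1}^m (ln^{m−j+1}(1+z)/(m−j+1)!)·Li_j(1/(1+z)), where Li₁(t) = −ln(1−t). -/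
open Real Filter Topology

lemma summable_aux {p : ℕ} (hp : 2 ≤ p) : Summable (fun n : ℕ => 1 / ((n:ℝ)+1)^p) := by
  have h := (Real.summable_one_div_nat_pow (p := p)).mpr hp
  have := (summable_nat_add_iff 1).mpr h
  simpa using this

lemma hasSum_Li {p : ℕ} (hp : 1 ≤ p) {x : ℝ} (hx : |x| ≤ 1) (hx1 : p = 1 → |x| < 1) :
    HasSum (fun n : ℕ => x ^ (n + 1) / ((n:ℝ)+1) ^ p) (Li p x) := by
  rcases eq_or_lt_of_le hp with h1 | h2
  · subst h1
    have := Real.hasSum_pow_div_log_of_abs_lt_one (hx1 rfl)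
    simp only [Li, if_pos rfl]
    simpa [pow_one] using this
  · have h2' : 2 ≤ p := h2
    have hsum : Summable (fun n : ℕ => x ^ (n + 1) / ((n:ℝ)+1) ^ p) := by
      apply Summable.of_norm_bounded (summable_aux h2')
      intro n
      rw [norm_div, norm_pow, norm_pow]
      have h1 : ‖x‖ ^ (n+1) ≤ 1 := pow_le_one₀ (norm_nonneg x) (by simpa using hx)
      have h2 : (0:ℝ) < ((n:ℝ)+1) ^ p := by positivity
      rw [Real.norm_eq_abs ((n:ℝ)+1), abs_of_pos (by positivity : (0:ℝ) < (n:ℝ)+1)]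
      rw [div_le_div_iff₀ h2 h2, one_mul]
      nlinarith [h2]
    have : Li p x = ∑' n : ℕ, x ^ (n + 1) / ((n:ℝ)+1) ^ p := by
      rw [Li, if_neg (by omega)]
    rw [this]
    exact hsum.hasSum

lemma li_zero {x : ℝ} (hx : |x| < 1) : Li 0 x = x / (1 - x) := by
  have hg : HasSum (fun n : ℕ => x ^ n) (1 - x)⁻¹ := hasSum_geometric_of_abs_lt_one hx
  have h2 : HasSum (fun n : ℕ => x ^ (n+1)) (x * (1 - x)⁻¹) := by
    simpa [pow_succ, mul_comm] using hg.mul_left x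
  rw [Li, if_neg (by omega)]
  have : (fun n : ℕ => x ^ (n+1) / ((n:ℝ)+1) ^ 0) = fun n : ℕ => x ^ (n+1) := by
    funext n; simp
  rw [this, h2.tsum_eq, div_eq_mul_inv]

lemma li_one_eq_zt {p : ℕ} (hp : 2 ≤ p) : Li p 1 = zt p := by
  rw [Li, if_neg (by omega), zt]
  exact tsum_congr fun n => by rw [one_pow]

lemma li_hasDerivAt {p : ℕ} (hp : 1 ≤ p) {x : ℝ} (hx0 : 0 < x) (hx1 : x < 1) :
    HasDerivAt (Li p) (Li (p-1) x / x) x := by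
  rcases eq_or_lt_of_le hp with h1 | h2
  · -- p = 1
    have hLi : Li p = fun y => -Real.log (1 - y) := by
      funext y; rw [Li, if_pos h1.symm]
    rw [hLi]
    have h1x : (1:ℝ) - x ≠ 0 := by linarith
    have hin : HasDerivAt (fun y : ℝ => 1 - y) (-1) x := (hasDerivAt_id x).const_sub 1
    have hlog : HasDerivAt (fun y : ℝ => Real.log (1 - y)) ((1-x)⁻¹ * (-1)) x :=
      (Real.hasDerivAt_log h1x).comp x hin
    have := hlog.neg
    refine this.congr_deriv ?_
    rw [← h1, Nat.sub_self, li_zero (by rw [abs_of_pos hx0]; exact hx1)]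
    field_simp
  · -- p ≥ 2
    have hp2 : 2 ≤ p := h2
    set r : ℝ := (1 + x) / 2 with hr
    have hxr : x < r := by rw [hr]; linarith
    have hr0 : (0:ℝ) < r := by rw [hr]; linarith
    have hr1 : r < 1 := by rw [hr]; linarith
    have hu : Summable (fun n : ℕ => r ^ n) := summable_geometric_of_lt_one hr0.le hr1
    have key : HasDerivAt (fun y : ℝ => ∑' n : ℕ, y ^ (n + 1) / ((n:ℝ)+1) ^ p)
        (∑' n : ℕ, x ^ n / ((n:ℝ)+1) ^ (p-1)) x := by
      refine hasDerivAt_tsum_of_isPreconnected hu isOpen_Ioo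
        (convex_Ioo (-r) r).isPreconnected
        (u := fun n : ℕ => r ^ n) (g' := fun n y => y ^ n / ((n:ℝ)+1) ^ (p-1))
        (y₀ := 0) ?_ ?_ ?_ ?_ ?_
      · intro n y hy
        have h := (hasDerivAt_pow (n+1) y).div_const (((n:ℝ)+1) ^ p)
        refine h.congr_deriv ?_
        have hps : p = (p-1) + 1 := by omega
        rw [hps, pow_succ]
        have hn1 : ((n:ℝ)+1) ≠ 0 := by positivity
        have hn2 : ((n:ℝ)+1)^(p-1) ≠ 0 := by positivity
        push_cast
        field_simp
      · intro n y hy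
        rw [norm_div, norm_pow, norm_pow]
        have h1 : ‖y‖ ≤ r := by
          rw [Real.norm_eq_abs, abs_le]
          exact ⟨hy.1.le, hy.2.le⟩
        have h2 : (1:ℝ) ≤ ‖(n:ℝ)+1‖ ^ (p-1) := by
          apply one_le_pow₀
          rw [Real.norm_eq_abs, abs_of_pos (by positivity)]
          simp
        calc ‖y‖ ^ n / ‖(n:ℝ)+1‖ ^ (p-1) ≤ ‖y‖ ^ n / 1 :=
              div_le_div_of_nonneg_left (by positivity) one_pos h2
          _ = ‖y‖ ^ n := div_one _
          _ ≤ r ^ n := pow_le_pow_left₀ (norm_nonneg y) h1 n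
      · exact ⟨by linarith, hr0⟩
      · have h0 : (fun n : ℕ => (0:ℝ) ^ (n+1) / ((n:ℝ)+1) ^ p) = fun _ => (0:ℝ) := by
          funext n; simp
        rw [h0]; exact summable_zero
      · exact ⟨by linarith, hxr⟩
    have hLi : Li p = fun y : ℝ => ∑' n : ℕ, y ^ (n + 1) / ((n:ℝ)+1) ^ p := by
      funext y; rw [Li, if_neg (by omega)]
    rw [hLi]
    convert key using 1
    have hs := hasSum_Li (p := p - 1) (by omega) (x := x)
      (by rw [abs_of_pos hx0]; exact hx1.le) (fun _ => by rw [abs_of_pos hx0]; exact hx1)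
    have hs2 := hs.div_const x
    rw [← hs2.tsum_eq]
    apply tsum_congr
    intro n
    rw [pow_succ]
    field_simp

lemma li_comp_hasDerivAt {p : ℕ} (hp : 1 ≤ p) {z : ℝ} (hz : 0 < z) :
    HasDerivAt (fun z : ℝ => Li p (1/(1+z))) (-Li (p-1) (1/(1+z)) / (1+z)) z := by
  have h1z : (0:ℝ) < 1 + z := by linarith
  have h1z' : (1:ℝ) + z ≠ 0 := h1z.ne'
  have hin : HasDerivAt (fun z : ℝ => 1/(1+z)) (-1/(1+z)^2) z := by
    have h := ((hasDerivAt_id z).const_add 1).inv h1z'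
    simpa [one_div, Pi.inv_def] using h
  have ht0 : 0 < 1/(1+z) := by positivity
  have ht1 : 1/(1+z) < 1 := by rw [div_lt_one h1z]; linarith
  have hout := li_hasDerivAt hp ht0 ht1
  have hc := hout.comp z hin
  refine hc.congr_deriv ?_
  field_simp

lemma log_one_add_tendsto : Tendsto (fun a : ℝ => Real.log (1+a)) (𝓝[>] 0) (𝓝 0) := by
  have h : ContinuousAt (fun a : ℝ => Real.log (1+a)) 0 :=
    ContinuousAt.comp (Real.continuousAt_log (by norm_num)) (by fun_prop)
  have := h.continuousWithinAt (s := Set.Ioi (0:ℝ))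
  simpa [ContinuousWithinAt] using this

lemma inner_tendsto : Tendsto (fun a : ℝ => 1/(1+a)) (𝓝[>] (0:ℝ)) (𝓝[Set.Icc (-1:ℝ) 1] 1) := by
  rw [tendsto_nhdsWithin_iff]
  constructor
  · have h : ContinuousAt (fun a : ℝ => 1/(1+a)) 0 := by
      apply ContinuousAt.div
      · fun_prop
      · fun_prop
      · norm_num
    have := h.continuousWithinAt (s := Set.Ioi (0:ℝ))
    simpa [ContinuousWithinAt] using this
  · filter_upwards [self_mem_nhdsWithin] with a (ha : 0 < a)
    constructor
    · rw [le_div_iff₀ (by linarith)]; linarith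
    · rw [div_le_one (by linarith)]; linarith

lemma li_continuousOn {p : ℕ} (hp : 2 ≤ p) :
    ContinuousOn (Li p) (Set.Icc (-1:ℝ) 1) := by
  have hLi : Li p = fun y : ℝ => ∑' n : ℕ, y ^ (n + 1) / ((n:ℝ)+1) ^ p := by
    funext y; rw [Li, if_neg (by omega)]
  rw [hLi]
  apply continuousOn_tsum (u := fun n : ℕ => 1 / ((n:ℝ)+1)^p)
  · intro n; fun_prop
  · exact summable_aux hp
  · intro n x hx
    rw [norm_div, norm_pow, norm_pow, Real.norm_eq_abs x,
      Real.norm_eq_abs ((n:ℝ)+1), abs_of_pos (by positivity : (0:ℝ) < (n:ℝ)+1)]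
    have h1 : |x| ^ (n+1) ≤ 1 := pow_le_one₀ (abs_nonneg x) (abs_le.mpr ⟨hx.1, hx.2⟩)
    have h2 : (0:ℝ) < ((n:ℝ)+1) ^ p := by positivity
    rw [div_le_div_iff₀ h2 h2, one_mul]
    nlinarith
lemma li_tendsto_one {p : ℕ} (hp : 2 ≤ p) :
    Tendsto (fun a : ℝ => Li p (1/(1+a))) (𝓝[>] (0:ℝ)) (𝓝 (zt p)) := by
  have hc := (li_continuousOn hp) 1 (by norm_num)
  have := hc.tendsto.comp inner_tendsto
  simpa [li_one_eq_zt hp, Function.comp_def] using this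

lemma li_one_term_tendsto {m : ℕ} (hm : 1 ≤ m) :
    Tendsto (fun a : ℝ => (Real.log (1+a))^m * Li 1 (1/(1+a))) (𝓝[>] (0:ℝ)) (𝓝 0) := by
  have heq : ∀ᶠ a in 𝓝[>] (0:ℝ), (Real.log (1+a))^m * Li 1 (1/(1+a))
      = (Real.log (1+a))^(m+1) - (Real.log (1+a))^m * Real.log a := by
    filter_upwards [self_mem_nhdsWithin] with a (ha : 0 < a)
    have h1a : (0:ℝ) < 1 + a := by linarith
    have : (1:ℝ) - 1/(1+a) = a/(1+a) := by field_simp; ring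
    rw [Li, if_pos rfl, this, Real.log_div ha.ne' h1a.ne']
    ring
  rw [Filter.tendsto_congr' heq]
  have h1 : Tendsto (fun a : ℝ => (Real.log (1+a))^(m+1)) (𝓝[>] (0:ℝ)) (𝓝 0) := by
    have := (log_one_add_tendsto).pow (m+1)
    simpa using this
  have h2 : Tendsto (fun a : ℝ => (Real.log (1+a))^m * Real.log a) (𝓝[>] (0:ℝ)) (𝓝 0) := by
    have hb : Tendsto (fun a : ℝ => |Real.log a * a ^ (1:ℝ)|) (𝓝[>] (0:ℝ)) (𝓝 0) := by
      have := (tendsto_log_mul_rpow_nhdsGT_zero one_pos).abs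
      simpa using this
    apply squeeze_zero_norm' _ hb
    filter_upwards [self_mem_nhdsWithin, Ioc_mem_nhdsGT one_pos]
      with a (ha : 0 < a) ha2
    have ha1 : a ≤ 1 := ha2.2
    have hL0 : 0 ≤ Real.log (1+a) := Real.log_nonneg (by linarith)
    have hLa : Real.log (1+a) ≤ a := by
      have := Real.log_le_sub_one_of_pos (by linarith : (0:ℝ) < 1 + a)
      linarith
    have hpow : (Real.log (1+a))^m ≤ a := by
      calc (Real.log (1+a))^m ≤ a^m := pow_le_pow_left₀ hL0 hLa m
        _ ≤ a^1 := pow_le_pow_of_le_one ha.le ha1 hm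
        _ = a := pow_one a
    rw [norm_mul, norm_pow, Real.norm_eq_abs, Real.norm_eq_abs, abs_of_nonneg hL0,
      Real.rpow_one, abs_mul, abs_of_pos ha, mul_comm |Real.log a| a]
    apply mul_le_mul_of_nonneg_right _ (abs_nonneg _)
    exact le_trans (by exact_mod_cast le_refl _) hpow
  have := h1.sub h2
  simpa using this

noncomputable def Fm (m : ℕ) (z : ℝ) : ℝ :=
  1/((m:ℝ)+1) * (Real.log (1+z))^(m+1)
  + (m.factorial : ℝ) * (zt (m+1) - Li (m+1) (1/(1+z)))
  - (m.factorial : ℝ) * ∑ j ∈ Finset.Icc 1 m,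
      (Real.log (1+z))^(m-j+1) / ((m-j+1).factorial : ℝ) * Li j (1/(1+z))

lemma Fm_hasDerivAt (m : ℕ) (hm : 1 ≤ m) {z : ℝ} (hz : 0 < z) :
    HasDerivAt (Fm m) ((Real.log (1+z))^m / z) z := by
  have h1z : (0:ℝ) < 1+z := by linarith
  have h1z' : (1:ℝ)+z ≠ 0 := h1z.ne'
  have hz' : z ≠ 0 := hz.ne'
  have hL : HasDerivAt (fun z : ℝ => Real.log (1+z)) (1/(1+z)) z := by
    have := (Real.hasDerivAt_log h1z.ne').comp z ((hasDerivAt_id z).const_add 1)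
    simpa [one_div, Function.comp_def] using this
  have ht0 : 0 < 1/(1+z) := by positivity
  have ht1 : 1/(1+z) < 1 := by rw [div_lt_one h1z]; linarith
  have hterm : ∀ j ∈ Finset.Icc 1 m,
      HasDerivAt (fun z : ℝ => (Real.log (1+z))^(m-j+1) / (((m-j+1).factorial : ℝ))
        * Li j (1/(1+z)))
      ((1/(1+z)) * ((Real.log (1+z))^(m+1-(j+1))/(((m+1-(j+1)).factorial : ℝ)) * Li j (1/(1+z))
        - (Real.log (1+z))^(m+1-j)/(((m+1-j).factorial : ℝ)) * Li (j-1) (1/(1+z)))) z := by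
    intro j hj
    rw [Finset.mem_Icc] at hj
    obtain ⟨hj1, hj2⟩ := hj
    have hd1 := (hL.pow (m-j+1)).div_const (((m-j+1).factorial : ℝ))
    have hd2 := li_comp_hasDerivAt hj1 hz
    have hmul := hd1.mul hd2
    refine hmul.congr_deriv ?_
    have e1 : m - j + 1 - 1 = m - j := by omega
    have e2 : m + 1 - (j+1) = m - j := by omega
    have e3 : m + 1 - j = m - j + 1 := by omega
    simp only [e1, e2, e3]
    generalize m - j = k
    have e4 : (((k+1).factorial : ℝ)) = ((k:ℝ)+1) * ((k.factorial : ℝ)) := by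
      push_cast [Nat.factorial_succ]
      ring
    have hf1 : ((k.factorial : ℝ)) ≠ 0 := Nat.cast_ne_zero.mpr (Nat.factorial_ne_zero _)
    have hf2 : ((k:ℝ)+1) ≠ 0 := by positivity
    rw [e4]
    push_cast
    field_simp
    simp only [Pi.pow_apply]
    ring
  have hsum := HasDerivAt.fun_sum hterm
  have htel : ∑ j ∈ Finset.Icc 1 m, ((1/(1+z)) *
        ((Real.log (1+z))^(m+1-(j+1))/(((m+1-(j+1)).factorial : ℝ)) * Li j (1/(1+z))
        - (Real.log (1+z))^(m+1-j)/(((m+1-j).factorial : ℝ)) * Li (j-1) (1/(1+z))))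
      = (1/(1+z)) * (Li m (1/(1+z))
          - (Real.log (1+z))^m/((m.factorial : ℝ)) * Li 0 (1/(1+z))) := by
    set a : ℕ → ℝ := fun k =>
      (Real.log (1+z))^(m+1-k)/(((m+1-k).factorial : ℝ)) * Li (k-1) (1/(1+z)) with hadef
    have step : ∀ j : ℕ, (Real.log (1+z))^(m+1-(j+1))/(((m+1-(j+1)).factorial : ℝ))
        * Li j (1/(1+z)) - (Real.log (1+z))^(m+1-j)/(((m+1-j).factorial : ℝ))
        * Li (j-1) (1/(1+z)) = a (j+1) - a j := by
      intro j; rw [hadef]; simp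
    have hsum2 : ∑ j ∈ Finset.Icc 1 m, ((1/(1+z)) * (a (j+1) - a j))
        = (1/(1+z)) * (a (m+1) - a 1) := by
      rw [← Finset.mul_sum]
      congr 1
      rw [← Finset.Ico_add_one_right_eq_Icc, Finset.sum_Ico_eq_sum_range]
      have : ∀ i ∈ Finset.range (m+1-1), a (1+i+1) - a (1+i) = a (i+1+1) - a (i+1) := by
        intro i _; rw [add_comm 1 i]
      rw [Finset.sum_congr rfl this, show m+1-1 = m from rfl,
        Finset.sum_range_sub (fun i => a (i+1)) m]
    have ha_top : a (m+1) = Li m (1/(1+z)) := by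
      rw [hadef]; simp [Nat.sub_self]
    have ha_one : a 1 = (Real.log (1+z))^m / ((m.factorial : ℝ)) * Li 0 (1/(1+z)) := by
      rw [hadef]; simp
    simp only [step]
    rw [hsum2, ha_top, ha_one]
  have hli0 : Li 0 (1/(1+z)) = 1/z := by
    rw [li_zero (by rw [abs_of_pos ht0]; exact ht1)]
    rw [div_eq_div_iff (by rw [sub_ne_zero]; exact ht1.ne') hz.ne']
    field_simp
    ring
  have h1 := (hL.pow (m+1)).const_mul (1/((m:ℝ)+1))
  have h2 := ((li_comp_hasDerivAt (p := m+1) (by omega) hz).const_sub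
      (zt (m+1))).const_mul ((m.factorial : ℝ))
  have htotal := (h1.add h2).sub (hsum.const_mul ((m.factorial : ℝ)))
  have hFm : Fm m = fun z : ℝ => 1/((m:ℝ)+1) * (Real.log (1+z))^(m+1)
      + (m.factorial : ℝ) * (zt (m+1) - Li (m+1) (1/(1+z)))
      - (m.factorial : ℝ) * ∑ j ∈ Finset.Icc 1 m,
        (Real.log (1+z))^(m-j+1) / ((m-j+1).factorial : ℝ) * Li j (1/(1+z)) := rfl
  rw [hFm]
  refine htotal.congr_deriv ?_
  rw [htel, hli0]
  have e5 : m + 1 - 1 = m := rfl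
  simp only [e5]
  have hf : ((m.factorial : ℝ)) ≠ 0 := Nat.cast_ne_zero.mpr (Nat.factorial_ne_zero _)
  have hm1 : ((m:ℝ)+1) ≠ 0 := by positivity
  push_cast
  field_simp
  ring

lemma Fm_tendsto_zero (m : ℕ) (hm : 1 ≤ m) : Tendsto (Fm m) (𝓝[>] (0:ℝ)) (𝓝 0) := by
  have T1 : Tendsto (fun a : ℝ => 1/((m:ℝ)+1) * (Real.log (1+a))^(m+1)) (𝓝[>] (0:ℝ)) (𝓝 0) := by
    have := (log_one_add_tendsto.pow (m+1)).const_mul (1/((m:ℝ)+1))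
    simpa using this
  have T2 : Tendsto (fun a : ℝ => (m.factorial : ℝ) * (zt (m+1) - Li (m+1) (1/(1+a))))
      (𝓝[>] (0:ℝ)) (𝓝 0) := by
    have := ((tendsto_const_nhds (x := zt (m+1)) (f := 𝓝[>] (0:ℝ))).sub
      (li_tendsto_one (p := m+1) (by omega))).const_mul ((m.factorial : ℝ))
    simpa using this
  have T3 : ∀ j ∈ Finset.Icc 1 m, Tendsto (fun a : ℝ =>
      (Real.log (1+a))^(m-j+1) / ((m-j+1).factorial : ℝ) * Li j (1/(1+a)))
      (𝓝[>] (0:ℝ)) (𝓝 0) := by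
    intro j hj
    rw [Finset.mem_Icc] at hj
    obtain ⟨hj1, hj2⟩ := hj
    rcases eq_or_lt_of_le hj1 with h1 | h2
    · -- j = 1
      subst h1
      have e : m - 1 + 1 = m := by omega
      simp only [e]
      have := (li_one_term_tendsto hm).div_const ((m.factorial : ℝ))
      simp only [div_mul_eq_mul_div, zero_div] at this ⊢
      convert this using 2
    · -- j ≥ 2
      have hpow : Tendsto (fun a : ℝ => (Real.log (1+a))^(m-j+1) / ((m-j+1).factorial : ℝ))
          (𝓝[>] (0:ℝ)) (𝓝 0) := by
        have := (log_one_add_tendsto.pow (m-j+1)).div_const ((m-j+1).factorial : ℝ)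
        simpa [zero_pow (by omega : m-j+1 ≠ 0)] using this
      have := hpow.mul (li_tendsto_one (p := j) h2)
      simpa using this
  have Tsum : Tendsto (fun a : ℝ => (m.factorial : ℝ) * ∑ j ∈ Finset.Icc 1 m,
      (Real.log (1+a))^(m-j+1) / ((m-j+1).factorial : ℝ) * Li j (1/(1+a)))
      (𝓝[>] (0:ℝ)) (𝓝 0) := by
    have hs := tendsto_finset_sum (Finset.Icc 1 m) T3
    have := hs.const_mul ((m.factorial : ℝ))
    simpa using this
  have hFm : Fm m = fun a : ℝ => 1/((m:ℝ)+1) * (Real.log (1+a))^(m+1)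
      + (m.factorial : ℝ) * (zt (m+1) - Li (m+1) (1/(1+a)))
      - (m.factorial : ℝ) * ∑ j ∈ Finset.Icc 1 m,
          (Real.log (1+a))^(m-j+1) / ((m-j+1).factorial : ℝ) * Li j (1/(1+a)) := rfl
  rw [hFm]
  have := (T1.add T2).sub Tsum
  simpa using this

theorem stmt7 (m : ℕ) (hm : 1 ≤ m) (z : ℝ) (hz₁ : 0 ≤ z) (hz₂ : z ≤ 1) :
    ∫ x in (0 : ℝ)..z, (Real.log (1 + x)) ^ m / x
      = 1 / ((m : ℝ) + 1) * (Real.log (1 + z)) ^ (m + 1)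
        + (m.factorial : ℝ) * (zt (m + 1) - Li (m + 1) (1 / (1 + z)))
        - (m.factorial : ℝ) * ∑ j ∈ Finset.Icc 1 m,
            (Real.log (1 + z)) ^ (m - j + 1) / ((m - j + 1).factorial : ℝ)
              * Li j (1 / (1 + z)) := by
  have hgoal : 1 / ((m : ℝ) + 1) * (Real.log (1 + z)) ^ (m + 1)
        + (m.factorial : ℝ) * (zt (m + 1) - Li (m + 1) (1 / (1 + z)))
        - (m.factorial : ℝ) * ∑ j ∈ Finset.Icc 1 m,
            (Real.log (1 + z)) ^ (m - j + 1) / ((m - j + 1).factorial : ℝ)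
              * Li j (1 / (1 + z)) = Fm m z := rfl
  rw [hgoal]
  rcases eq_or_lt_of_le hz₁ with h0 | hz0
  · -- z = 0
    rw [← h0]
    rw [intervalIntegral.integral_same, Fm]
    rw [show (1:ℝ)+0 = 1 by norm_num, Real.log_one, show (1:ℝ)/1 = 1 by norm_num,
      li_one_eq_zt (by omega)]
    rw [Finset.sum_eq_zero (fun j hj => by
      rw [zero_pow (by omega : m - j + 1 ≠ 0), zero_div, zero_mul])]
    simp [zero_pow (by omega : m + 1 ≠ 0)]
  · -- z > 0
    set f : ℝ → ℝ := fun x => (Real.log (1+x))^m / x with hfdef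
    have hmeas : Measurable f := by
      apply Measurable.div
      · exact (Real.measurable_log.comp (measurable_const.add measurable_id)).pow_const m
      · exact measurable_id
    have hbound : ∀ x : ℝ, 0 < x → x ≤ 1 → ‖f x‖ ≤ 1 := by
      intro x hx0 hx1
      have hL0 : 0 ≤ Real.log (1+x) := Real.log_nonneg (by linarith)
      have hLa : Real.log (1+x) ≤ x := by
        have := Real.log_le_sub_one_of_pos (by linarith : (0:ℝ) < 1 + x)
        linarith
      have h1 : (Real.log (1+x))^m ≤ x^m := pow_le_pow_left₀ hL0 hLa m
      have h2 : x^m ≤ x := by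
        calc x^m ≤ x^1 := pow_le_pow_of_le_one hx0.le hx1 hm
          _ = x := pow_one x
      rw [hfdef, Real.norm_eq_abs, abs_div, abs_of_nonneg (pow_nonneg hL0 m),
        abs_of_pos hx0, div_le_one hx0]
      nlinarith
    have hInt : IntervalIntegrable f MeasureTheory.volume 0 z := by
      rw [intervalIntegrable_iff_integrableOn_Ioc_of_le hz₁]
      apply MeasureTheory.Integrable.mono'
        (MeasureTheory.integrableOn_const (C := (1:ℝ)) measure_Ioc_lt_top.ne)
        (hmeas.aestronglyMeasurable.restrict)
      rw [MeasureTheory.ae_restrict_iff' measurableSet_Ioc]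
      filter_upwards with x hx
      exact hbound x hx.1 (le_trans hx.2 hz₂)
    have key : ∀ a ∈ Set.Ioc (0:ℝ) z, ∫ x in (0:ℝ)..z, f x
        = (∫ x in (0:ℝ)..a, f x) + (Fm m z - Fm m a) := by
      intro a ha
      have hIa : IntervalIntegrable f MeasureTheory.volume 0 a := by
        apply hInt.mono_set
        rw [Set.uIcc_of_le ha.1.le, Set.uIcc_of_le hz₁]
        exact Set.Icc_subset_Icc le_rfl ha.2
      have hIaz : IntervalIntegrable f MeasureTheory.volume a z := by
        apply hInt.mono_set
        rw [Set.uIcc_of_le ha.2, Set.uIcc_of_le hz₁]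
        exact Set.Icc_subset_Icc ha.1.le le_rfl
      have hFTC : ∫ x in a..z, f x = Fm m z - Fm m a := by
        apply intervalIntegral.integral_eq_sub_of_hasDerivAt _ hIaz
        intro x hx
        rw [Set.uIcc_of_le ha.2] at hx
        exact Fm_hasDerivAt m hm (lt_of_lt_of_le ha.1 hx.1)
      rw [← intervalIntegral.integral_add_adjacent_intervals hIa hIaz, hFTC]
    have hev : ∀ᶠ a in 𝓝[>] (0:ℝ), a ∈ Set.Ioc (0:ℝ) z :=
      Ioc_mem_nhdsGT hz0
    have h1 : Tendsto (fun a : ℝ => ∫ x in (0:ℝ)..a, f x) (𝓝[>] (0:ℝ)) (𝓝 0) := by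
      apply squeeze_zero_norm' (a := fun a : ℝ => |a|)
      · filter_upwards [hev] with a ha
        have hb : ∀ x ∈ Set.uIoc (0:ℝ) a, ‖f x‖ ≤ 1 := by
          intro x hx
          rw [Set.uIoc_of_le ha.1.le] at hx
          exact hbound x hx.1 (le_trans hx.2 (le_trans ha.2 hz₂))
        have := intervalIntegral.norm_integral_le_of_norm_le_const hb
        simpa using this
      · have : Tendsto (fun a : ℝ => |a|) (𝓝 (0:ℝ)) (𝓝 0) := by
          simpa using continuous_abs.tendsto (0:ℝ)
        exact this.mono_left nhdsWithin_le_nhds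
    have h2 := Fm_tendsto_zero m hm
    have heq : ∀ᶠ a in 𝓝[>] (0:ℝ),
        (∫ x in (0:ℝ)..a, f x) + (Fm m z - Fm m a) = ∫ x in (0:ℝ)..z, f x := by
      filter_upwards [hev] with a ha
      exact (key a ha).symm
    have hT : Tendsto (fun a : ℝ => (∫ x in (0:ℝ)..a, f x) + (Fm m z - Fm m a))
        (𝓝[>] (0:ℝ)) (𝓝 (Fm m z)) := by
      have := h1.add ((tendsto_const_nhds (x := Fm m z) (f := 𝓝[>] (0:ℝ))).sub h2)
      simpa using this
    have := tendsto_nhds_unique ((tendsto_congr' heq).mp hT) tendsto_const_nhds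
    exact this.symm
end

section
/- For every integer m ≥ 1: ∑_{n=1}^∞ (-1)^{n-1} Y_m(n)/n = m!·Li_{m+1}(1/2), where Y_m(n) is the complete Bell polynomial at (H_n, 1!H_n^{(2)}, …, (m−1)!H_n^{(m)}). -/
open Real Filter

/-- Complete exponential Bell polynomial `Y_k(x₁, x₂, …)`. -/
noncomputable def bellY : ℕ → (ℕ → ℝ) → ℝ
  | 0, _ => 1
  | (n + 1), x =>
      ∑ i ∈ Finset.range (n + 1), (n.choose i : ℝ) * x (i + 1) * bellY (n - i) x
  decreasing_by exact Nat.lt_succ_of_le (Nat.sub_le n i)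

/-- `Y_k(n)`: complete Bell polynomial at `(H_n, 1! H_n^(2), …, (r-1)! H_n^(r), …)`. -/
noncomputable def Y (k n : ℕ) : ℝ := bellY k (fun r => ((r - 1).factorial : ℝ) * H r n)

namespace St11
open Finset


noncomputable def hp : ℕ → ℕ → ℝ
  | m, 0 => if m = 0 then 1 else 0
  | m, N+1 => ∑ i ∈ Finset.range (m+1), hp (m-i) N * (1/((N:ℝ)+1))^i

lemma hp_zero (m : ℕ) : hp m 0 = if m = 0 then 1 else 0 := rfl

lemma hp_succ (m N : ℕ) :
    hp m (N+1) = ∑ i ∈ Finset.range (m+1), hp (m-i) N * (1/((N:ℝ)+1))^i := rfl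

lemma hp_zero' (N : ℕ) : hp 0 N = 1 := by
  induction N with
  | zero => rfl
  | succ N ih => rw [hp_succ]; simp [ih]

lemma hp_diff (m N : ℕ) :
    hp (m+1) (N+1) = hp (m+1) N + hp m (N+1) * (1/((N:ℝ)+1)) := by
  rw [hp_succ (m+1) N, Finset.sum_range_succ' _ (m+1)]
  simp only [Nat.succ_sub_succ_eq_sub, Nat.sub_zero, pow_zero, mul_one, pow_succ]
  rw [hp_succ m N, Finset.sum_mul, add_comm]
  congr 1
  exact Finset.sum_congr rfl fun i _ => by ring


lemma hp_one (m : ℕ) : hp m 1 = 1 := by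
  induction m with
  | zero => exact hp_zero' 1
  | succ m ih =>
      rw [hp_diff]
      simp [hp_zero, ih]

lemma H_zero (r : ℕ) : H r 0 = 0 := by simp [H]

lemma H_succ (r N : ℕ) : H r (N+1) = H r N + (1/((N:ℝ)+1))^r := by
  rw [H, Finset.sum_range_succ, ← H, div_pow, one_pow]

/-- Newton's identity for complete homogeneous symmetric functions in 1,...,1/N. -/
lemma newton : ∀ (m N : ℕ), ((m:ℝ)+1) * hp (m+1) N = ∑ r ∈ Finset.range (m+1), H (r+1) N * hp (m-r) N := by
  intro m
  induction m using Nat.strong_induction_on with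
  | _ m ihm =>
    intro N
    induction N with
    | zero =>
        simp [hp_zero, H_zero]
    | succ N ihN =>
        set c : ℝ := 1/((N:ℝ)+1) with hc
        have key : ∀ r ∈ Finset.range (m+1),
            H (r+1) (N+1) * hp (m-r) (N+1)
              = H (r+1) (N+1) * hp (m-r) N
                + (if r < m then H (r+1) (N+1) * hp (m-1-r) (N+1) * c else 0) := by
          intro r hr
          rw [Finset.mem_range] at hr
          by_cases h : r < m
          · rw [if_pos h]
            have h1 : m - r = (m - 1 - r) + 1 := by omega
            rw [h1, hp_diff]
            ring
          · have hrm : r = m := by omega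
            rw [if_neg h, hrm]
            simp [hp_zero']
        rw [Finset.sum_congr rfl key, Finset.sum_add_distrib]
        -- second part: if-sum equals sum over range m
        have h2 : ∑ r ∈ Finset.range (m+1),
            (if r < m then H (r+1) (N+1) * hp (m-1-r) (N+1) * c else 0)
            = ∑ r ∈ Finset.range m, H (r+1) (N+1) * hp (m-1-r) (N+1) * c := by
          rw [Finset.sum_range_succ, if_neg (lt_irrefl m)]
          rw [add_zero]
          exact Finset.sum_congr rfl fun r hr => if_pos (Finset.mem_range.mp hr)
        rw [h2]
        -- second sum evaluates via induction hypothesis on m-1 (or is empty)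
        have h3 : ∑ r ∈ Finset.range m, H (r+1) (N+1) * hp (m-1-r) (N+1) * c
            = (m:ℝ) * hp m (N+1) * c := by
          cases m with
          | zero => simp
          | succ s =>
              have := ihm s (Nat.lt_succ_self s) (N+1)
              rw [← Finset.sum_mul]
              have hrw : ∑ r ∈ Finset.range (s+1), H (r+1) (N+1) * hp (s+1-1-r) (N+1)
                  = ∑ r ∈ Finset.range (s+1), H (r+1) (N+1) * hp (s-r) (N+1) := by
                exact Finset.sum_congr rfl fun r _ => by norm_num
              rw [hrw, ← this]
              push_cast
              ring
        rw [h3]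
        -- first sum: split H at N+1
        have h4 : ∑ r ∈ Finset.range (m+1), H (r+1) (N+1) * hp (m-r) N
            = (∑ r ∈ Finset.range (m+1), H (r+1) N * hp (m-r) N)
              + ∑ r ∈ Finset.range (m+1), c^(r+1) * hp (m-r) N := by
          rw [← Finset.sum_add_distrib]
          exact Finset.sum_congr rfl fun r _ => by rw [H_succ]; ring
        rw [h4, ← ihN]
        have h5 : ∑ r ∈ Finset.range (m+1), c^(r+1) * hp (m-r) N = hp m (N+1) * c := by
          rw [hp_succ m N, Finset.sum_mul]
          exact Finset.sum_congr rfl fun r _ => by ring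
        rw [h5, hp_diff]
        ring




lemma Y_eq_hp : ∀ (k N : ℕ), Y k N = (k.factorial : ℝ) * hp k N := by
  intro k
  induction k using Nat.strong_induction_on with
  | _ k ihk =>
    intro N
    cases k with
    | zero => simp [Y, bellY, hp_zero']
    | succ n =>
        rw [Y, bellY]
        have step : ∀ i ∈ Finset.range (n+1),
            (n.choose i : ℝ) * ((fun r => ((r - 1).factorial : ℝ) * H r N) (i+1))
              * bellY (n - i) (fun r => ((r - 1).factorial : ℝ) * H r N)
            = (n.factorial : ℝ) * (H (i+1) N * hp (n-i) N) := by
          intro i hi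
          rw [Finset.mem_range] at hi
          have h1 : bellY (n - i) (fun r => ((r - 1).factorial : ℝ) * H r N)
              = ((n-i).factorial : ℝ) * hp (n-i) N := ihk (n-i) (Nat.lt_succ_of_le (Nat.sub_le n i)) N
          rw [h1]
          simp only [Nat.add_sub_cancel]
          have h2 : (n.choose i) * i.factorial * (n-i).factorial = n.factorial :=
            Nat.choose_mul_factorial_mul_factorial (Nat.le_of_lt_succ hi)
          have h2' : ((n.choose i : ℝ)) * (i.factorial : ℝ) * ((n-i).factorial : ℝ) = (n.factorial : ℝ) := by
            exact_mod_cast congrArg (Nat.cast : ℕ → ℝ) h2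
          calc (n.choose i : ℝ) * ((i.factorial : ℝ) * H (i+1) N) * (((n-i).factorial : ℝ) * hp (n-i) N)
              = ((n.choose i : ℝ) * (i.factorial : ℝ) * ((n-i).factorial : ℝ)) * (H (i+1) N * hp (n-i) N) := by ring
            _ = (n.factorial : ℝ) * (H (i+1) N * hp (n-i) N) := by rw [h2']
        rw [Finset.sum_congr rfl step, ← Finset.mul_sum, ← newton n N]
        rw [Nat.factorial_succ]
        push_cast
        ring



noncomputable def Pd (g : ℕ → ℝ) (n x : ℕ) : ℝ :=
  ∑ i ∈ Finset.range (n+1), (-1:ℝ)^i * (n.choose i : ℝ) * g (x+i)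

lemma Pd_zero (g : ℕ → ℝ) (x : ℕ) : Pd g 0 x = g x := by simp [Pd]

lemma Pd_succ (g : ℕ → ℝ) (n x : ℕ) : Pd g (n+1) x = Pd g n x - Pd g n (x+1) := by
  have hT : ∑ i ∈ Finset.range (n+1), (-1:ℝ)^(i+1) * (n.choose (i+1) : ℝ) * g (x+(i+1))
      = Pd g n x - g x := by
    rw [Finset.sum_range_succ, Nat.choose_succ_self, Pd, Finset.sum_range_succ' _ n]
    simp
  have hx : Pd g (n+1) x
      = g x + ∑ i ∈ Finset.range (n+1), (-1:ℝ)^(i+1) * ((n+1).choose (i+1) : ℝ) * g (x+(i+1)) := by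
    rw [Pd, Finset.sum_range_succ' _ (n+1)]
    simp only [pow_zero, Nat.choose_zero_right, Nat.cast_one, one_mul, Nat.add_zero, mul_one]
    rw [add_comm]
  rw [hx]
  have hsplit : ∀ i ∈ Finset.range (n+1),
      (-1:ℝ)^(i+1) * ((n+1).choose (i+1) : ℝ) * g (x+(i+1))
      = (-((-1:ℝ)^i * (n.choose i : ℝ) * g ((x+1)+i)))
        + (-1:ℝ)^(i+1) * (n.choose (i+1) : ℝ) * g (x+(i+1)) := by
    intro i _
    have e : (x+1)+i = x+(i+1) := by omega
    rw [e, Nat.choose_succ_succ]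
    push_cast
    ring
  rw [Finset.sum_congr rfl hsplit, Finset.sum_add_distrib, Finset.sum_neg_distrib, hT]
  rw [show Pd g n (x+1) = ∑ i ∈ Finset.range (n+1), (-1:ℝ)^i * (n.choose i : ℝ) * g ((x+1)+i) from rfl]
  ring

lemma Pd_leibniz (g h : ℕ → ℝ) : ∀ (n x : ℕ), Pd (fun k => g k * h k) n x
    = ∑ k ∈ Finset.range (n+1), (n.choose k : ℝ) * Pd g k x * Pd h (n-k) (x+k) := by
  intro n
  induction n with
  | zero => intro x; simp [Pd]
  | succ n ih =>
    intro x
    rw [Pd_succ, ih x, ih (x+1), ← Finset.sum_sub_distrib]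
    have key : ∀ k ∈ Finset.range (n+1),
        (n.choose k : ℝ) * Pd g k x * Pd h (n-k) (x+k)
          - (n.choose k : ℝ) * Pd g k (x+1) * Pd h (n-k) ((x+1)+k)
        = (n.choose k : ℝ) * Pd g (k+1) x * Pd h (n-k) (x+(k+1))
          + (n.choose k : ℝ) * Pd g k x * Pd h (n+1-k) (x+k) := by
      intro k hk
      rw [Finset.mem_range] at hk
      have e1 : (x+1)+k = x+(k+1) := by omega
      have e2 : n+1-k = (n-k)+1 := by omega
      rw [e1, e2, Pd_succ g k x, Pd_succ h (n-k) (x+k)]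
      have e3 : x+k+1 = x+(k+1) := by omega
      rw [e3]
      ring
    rw [Finset.sum_congr rfl key, Finset.sum_add_distrib]
    have hA : ∑ k ∈ Finset.range (n+1), (n.choose k : ℝ) * Pd g (k+1) x * Pd h (n-k) (x+(k+1))
        = ∑ k ∈ Finset.range (n+1), ((n+1).choose (k+1) : ℝ) * Pd g (k+1) x * Pd h (n-k) (x+(k+1))
          - ∑ k ∈ Finset.range (n+1), (n.choose (k+1) : ℝ) * Pd g (k+1) x * Pd h (n-k) (x+(k+1)) := by
      rw [← Finset.sum_sub_distrib]
      apply Finset.sum_congr rfl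
      intro k _
      rw [Nat.choose_succ_succ]
      push_cast
      ring
    have hB : ∑ k ∈ Finset.range (n+1), (n.choose k : ℝ) * Pd g k x * Pd h (n+1-k) (x+k)
        = (∑ k ∈ Finset.range n, (n.choose (k+1) : ℝ) * Pd g (k+1) x * Pd h (n-k) (x+(k+1)))
          + Pd g 0 x * Pd h (n+1) x := by
      rw [Finset.sum_range_succ' _ n]
      simp only [Nat.choose_zero_right, Nat.cast_one, one_mul, Nat.add_zero, Nat.sub_zero,
        Nat.succ_sub_succ_eq_sub]
    have hC : ∑ k ∈ Finset.range (n+1), (n.choose (k+1) : ℝ) * Pd g (k+1) x * Pd h (n-k) (x+(k+1))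
        = ∑ k ∈ Finset.range n, (n.choose (k+1) : ℝ) * Pd g (k+1) x * Pd h (n-k) (x+(k+1)) := by
      rw [Finset.sum_range_succ, Nat.choose_succ_self]
      simp
    rw [hA, hB, hC]
    rw [Finset.sum_range_succ' _ (n+1)]
    simp only [Nat.choose_zero_right, Nat.cast_one, one_mul, Nat.add_zero, Nat.sub_zero,
      Nat.succ_sub_succ_eq_sub]
    ring

/-- `Pd` of `1/(x+1)` : explicit positive formula. -/
lemma Pd_inv : ∀ (n x : ℕ), Pd (fun k => 1/((k:ℝ)+1)) n x
    = (n.factorial : ℝ) / ∏ i ∈ Finset.range (n+1), ((x+i+1 : ℕ) : ℝ) := by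
  intro n
  induction n with
  | zero => intro x; simp [Pd]
  | succ n ih =>
    intro x
    have hQpos : ∀ (y k : ℕ), (0:ℝ) < ∏ i ∈ Finset.range k, ((y+i+1 : ℕ) : ℝ) := by
      intro y k
      apply Finset.prod_pos
      intro i _
      have : 0 < y + i + 1 := by omega
      exact_mod_cast this
    set A := ∏ i ∈ Finset.range (n+1), ((x+i+1 : ℕ) : ℝ) with hAdef
    set B := ∏ i ∈ Finset.range (n+1), ((x+1+i+1 : ℕ) : ℝ) with hBdef
    set C := ∏ i ∈ Finset.range (n+2), ((x+i+1 : ℕ) : ℝ) with hCdef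
    have hA : (0:ℝ) < A := hQpos x (n+1)
    have hB : (0:ℝ) < B := hQpos (x+1) (n+1)
    have hC1 : C = A * ((x:ℝ)+(n:ℝ)+2) := by
      rw [hCdef, Finset.prod_range_succ]
      congr 1
      push_cast
      ring
    have hC2 : C = ((x:ℝ)+1) * B := by
      rw [hCdef, Finset.prod_range_succ' (fun i => ((x+i+1 : ℕ) : ℝ)) (n+1), mul_comm]
      congr 1
      · push_cast; ring
      · rw [hBdef]
        apply Finset.prod_congr rfl
        intro i _
        congr 1
        omega
    rw [Pd_succ, ih x, ih (x+1)]
    have hBeq : ∏ i ∈ Finset.range (n+1), ((x+1+i+1 : ℕ) : ℝ) = B := rfl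
    rw [hBeq]
    have hfac : (((n+1).factorial : ℕ) : ℝ) = ((n:ℝ)+1) * (n.factorial : ℝ) := by
      rw [Nat.factorial_succ]; push_cast; ring
    rw [div_sub_div _ _ (ne_of_gt hA) (ne_of_gt hB), div_eq_div_iff (by positivity) (ne_of_gt (by positivity : (0:ℝ) < C))]
    linear_combination ((n.factorial : ℝ) * B) * hC1 - ((n.factorial : ℝ) * A) * hC2 - (A*B) * hfac

lemma Pd_inv_pos (n x : ℕ) : 0 < Pd (fun k => 1/((k:ℝ)+1)) n x := by
  rw [Pd_inv]
  have hQpos : (0:ℝ) < ∏ i ∈ Finset.range (n+1), ((x+i+1 : ℕ) : ℝ) := by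
    apply Finset.prod_pos
    intro i _
    have : 0 < x + i + 1 := by omega
    exact_mod_cast this
  positivity

lemma Pd_pow_nonneg (s : ℕ) : ∀ (n x : ℕ), 0 ≤ Pd (fun k => (1/((k:ℝ)+1))^(s+1)) n x := by
  induction s with
  | zero =>
      intro n x
      have : (fun k : ℕ => (1/((k:ℝ)+1))^(0+1)) = fun k : ℕ => 1/((k:ℝ)+1) := by
        funext k; rw [pow_one]
      rw [this]
      exact le_of_lt (Pd_inv_pos n x)
  | succ s ih =>
      intro n x
      have : (fun k : ℕ => (1/((k:ℝ)+1))^(s+2)) = fun k : ℕ => (1/((k:ℝ)+1)) * (1/((k:ℝ)+1))^(s+1) := by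
        funext k; rw [pow_succ']
      rw [this, Pd_leibniz]
      apply Finset.sum_nonneg
      intro k _
      have h1 := Pd_inv_pos k x
      have h2 := ih (n-k) (x+k)
      positivity




noncomputable def Abin (m N : ℕ) : ℝ :=
  ∑ k ∈ Finset.range N, (-1:ℝ)^k * (N.choose (k+1) : ℝ) * (1/((k:ℝ)+1))^m

lemma Abin_zero (N : ℕ) : Abin 0 (N+1) = 1 := by
  have h : ∀ k ∈ Finset.range (N+1), (-1:ℝ)^k * ((N+1).choose (k+1) : ℝ) * (1/((k:ℝ)+1))^0
      = -((-1:ℝ)^(k+1) * ((N+1).choose (k+1) : ℝ)) := by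
    intro k _
    rw [pow_zero]
    ring
  rw [Abin, Finset.sum_congr rfl h, Finset.sum_neg_distrib]
  have h2 : ∑ k ∈ Finset.range (N+1), (-1:ℝ)^(k+1) * ((N+1).choose (k+1) : ℝ)
      = (∑ k ∈ Finset.range (N+2), (-1:ℝ)^k * ((N+1).choose k : ℝ)) - 1 := by
    rw [Finset.sum_range_succ' (fun k => (-1:ℝ)^k * ((N+1).choose k : ℝ)) (N+1)]
    simp
  have h3 : ∑ k ∈ Finset.range (N+2), (-1:ℝ)^k * ((N+1).choose k : ℝ) = 0 := by
    have := Int.alternating_sum_range_choose_of_ne (Nat.succ_ne_zero N)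
    have h4 : ((∑ i ∈ Finset.range (N+2), (-1:ℤ)^i * ((N+1).choose i : ℤ) : ℤ) : ℝ)
        = ∑ k ∈ Finset.range (N+2), (-1:ℝ)^k * ((N+1).choose k : ℝ) := by
      push_cast
      rfl
    rw [← h4, this]
    simp
  rw [h2, h3]
  norm_num

lemma Abin_diff (m N : ℕ) :
    Abin (m+1) (N+1) = Abin (m+1) N + (1/((N:ℝ)+1)) * Abin m (N+1) := by
  have key : Abin (m+1) (N+1) - Abin (m+1) N
      = ∑ k ∈ Finset.range (N+1), (-1:ℝ)^k * (N.choose k : ℝ) * (1/((k:ℝ)+1))^(m+1) := by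
    rw [Abin, Abin]
    have hext : ∑ k ∈ Finset.range N, (-1:ℝ)^k * (N.choose (k+1) : ℝ) * (1/((k:ℝ)+1))^(m+1)
        = ∑ k ∈ Finset.range (N+1), (-1:ℝ)^k * (N.choose (k+1) : ℝ) * (1/((k:ℝ)+1))^(m+1) := by
      rw [Finset.sum_range_succ, Nat.choose_succ_self]
      simp
    rw [hext, ← Finset.sum_sub_distrib]
    apply Finset.sum_congr rfl
    intro k _
    rw [Nat.choose_succ_succ]
    push_cast
    ring
  have key2 : ∑ k ∈ Finset.range (N+1), (-1:ℝ)^k * (N.choose k : ℝ) * (1/((k:ℝ)+1))^(m+1)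
      = (1/((N:ℝ)+1)) * Abin m (N+1) := by
    rw [Abin, Finset.mul_sum]
    apply Finset.sum_congr rfl
    intro k hk
    have hc : ((N+1) : ℕ) * N.choose k = ((N+1).choose (k+1)) * (k+1) := by
      rw [Nat.add_one_mul_choose_eq]
    have hcr : ((N:ℝ)+1) * (N.choose k : ℝ) = ((N+1).choose (k+1) : ℝ) * ((k:ℝ)+1) := by
      exact_mod_cast hc
    have hk1 : ((k:ℝ)+1) ≠ 0 := by positivity
    have hN1 : ((N:ℝ)+1) ≠ 0 := by positivity
    have hpow : (1/((k:ℝ)+1))^(m+1) = (1/((k:ℝ)+1))^m * (1/((k:ℝ)+1)) := pow_succ _ _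
    have h5 : (N.choose k : ℝ) = ((N+1).choose (k+1):ℝ) * ((k:ℝ)+1) / ((N:ℝ)+1) := by
      rw [eq_div_iff hN1]
      linarith [hcr]
    set u := (1/((k:ℝ)+1))^m with hu
    rw [hpow, h5]
    field_simp
  linarith [key, key2]

lemma Abin_eq_hp : ∀ (m N : ℕ), Abin m (N+1) = hp m (N+1) := by
  intro m
  induction m with
  | zero => intro N; rw [Abin_zero, hp_zero']
  | succ m ih =>
      intro N
      induction N with
      | zero =>
          rw [hp_one, Abin]
          simp
      | succ N ihN =>
          rw [Abin_diff, hp_diff m (N+1), ihN, ih (N+1)]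
          push_cast
          ring

lemma hp_sum_form (m N : ℕ) : hp (m+1) N = ∑ k ∈ Finset.range N, hp m (k+1) * (1/((k:ℝ)+1)) := by
  induction N with
  | zero => simp [hp_zero]
  | succ N ih => rw [hp_diff, ih, Finset.sum_range_succ]

lemma hp_div_tendsto : ∀ m, Tendsto (fun N => hp m N / (N:ℝ)) atTop (nhds 0) := by
  intro m
  induction m with
  | zero =>
      apply tendsto_one_div_atTop_nhds_zero_nat.congr
      intro N
      rw [hp_zero']
  | succ m ih =>
      have hu : Tendsto (fun k : ℕ => hp m (k+1) * (1/((k:ℝ)+1))) atTop (nhds 0) := by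
        have h2 := ih.comp (tendsto_add_atTop_nat 1)
        apply h2.congr
        intro k
        simp only [Function.comp_apply]
        push_cast
        rw [div_eq_mul_one_div]
      have h3 := hu.cesaro
      apply h3.congr
      intro n
      rw [← hp_sum_form, inv_mul_eq_div]



lemma main_conv (b : ℕ → ℕ → ℝ)
    (hpos : ∀ j n, 0 ≤ b j n)
    (hpas : ∀ j n, b j (n+1) = b j n - b (j+1) n)
    (hb00 : ∀ j, b j 0 ≤ 1)
    (hb0tend : Tendsto (fun n => b 0 n) atTop (nhds 0)) :
    Tendsto (fun N => ∑ n ∈ Finset.range N, (-1:ℝ)^n * b 0 n) atTop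
      (nhds (∑' k : ℕ, b k 0 * (1/2:ℝ)^(k+1))) := by
  -- telescoping sums
  have tele : ∀ j N, ∑ n ∈ Finset.range N, b (j+1) n = b j 0 - b j N := by
    intro j N
    induction N with
    | zero => simp
    | succ N ih => rw [Finset.sum_range_succ, ih, hpas j N]; ring
  have summable_bj : ∀ j, Summable (b (j+1)) := by
    intro j
    apply summable_of_sum_range_le (c := b j 0) (fun n => hpos (j+1) n)
    intro n
    rw [tele j n]
    have := hpos j n
    linarith
  have btend : ∀ j, Tendsto (fun n => b j n) atTop (nhds 0) := by
    intro j
    cases j with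
    | zero => exact hb0tend
    | succ j => exact (summable_bj j).tendsto_atTop_zero
  have habs : ∀ j, (fun n => |(-1:ℝ)^n * b j n|) = b j := by
    intro j
    funext n
    rw [abs_mul, abs_pow, abs_neg, abs_one, one_pow, one_mul, abs_of_nonneg (hpos j n)]
  have summable_alt : ∀ j, Summable (fun n => (-1:ℝ)^n * b (j+1) n) := by
    intro j
    apply Summable.of_abs
    rw [habs (j+1)]
    exact summable_bj j
  set V : ℕ → ℕ → ℝ := fun j N => ∑ n ∈ Finset.range N, (-1:ℝ)^n * b j n with hV
  set T : ℕ → ℝ := fun j => ∑' n, (-1:ℝ)^n * b (j+1) n with hT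
  have hVT : ∀ j, Tendsto (fun N => V (j+1) N) atTop (nhds (T j)) := by
    intro j
    exact (summable_alt j).hasSum.tendsto_sum_nat
  have signtend : ∀ j, Tendsto (fun N => (-1:ℝ)^N * b j N) atTop (nhds 0) := by
    intro j
    have hb : ∀ n, ‖(-1:ℝ)^n * b j n‖ ≤ b j n := by
      intro n
      rw [Real.norm_eq_abs]
      exact le_of_eq (congrFun (habs j) n)
    exact squeeze_zero_norm hb (btend j)
  have EU : ∀ j N, 2 * V j N = b j 0 - (-1:ℝ)^N * b j N + V (j+1) N := by
    intro j N
    induction N with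
    | zero => simp [hV]
    | succ N ih =>
        have h1 : V j (N+1) = V j N + (-1:ℝ)^N * b j N := Finset.sum_range_succ _ N
        have h2 : V (j+1) (N+1) = V (j+1) N + (-1:ℝ)^N * b (j+1) N := Finset.sum_range_succ _ N
        rw [h1, h2, hpas j N, pow_succ]
        ring_nf
        ring_nf at ih
        linarith [ih]
  have Trec : ∀ j, 2 * T j = b (j+1) 0 + T (j+1) := by
    intro j
    have h1 : Tendsto (fun N => 2 * V (j+1) N) atTop (nhds (2 * T j)) := (hVT j).const_mul 2
    have h2 : (fun N => 2 * V (j+1) N)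
        = fun N => b (j+1) 0 - (-1:ℝ)^N * b (j+1) N + V (j+2) N := funext (EU (j+1))
    rw [h2] at h1
    have h3 : Tendsto (fun N => b (j+1) 0 - (-1:ℝ)^N * b (j+1) N + V (j+2) N) atTop
        (nhds (b (j+1) 0 - 0 + T (j+1))) :=
      (tendsto_const_nhds.sub (signtend (j+1))).add (hVT (j+1))
    have := tendsto_nhds_unique h1 h3
    rw [this]; ring
  set L : ℝ := b 0 0 / 2 + T 0 / 2 with hL
  have hV0 : Tendsto (fun N => V 0 N) atTop (nhds L) := by
    have h2 : (fun N => V 0 N)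
        = fun N => (b 0 0 - (-1:ℝ)^N * b 0 N + V 1 N) / 2 := by
      funext N
      have := EU 0 N
      linarith
    rw [h2]
    have h3 : Tendsto (fun N => (b 0 0 - (-1:ℝ)^N * b 0 N + V 1 N) / 2) atTop
        (nhds ((b 0 0 - 0 + T 0) / 2)) :=
      ((tendsto_const_nhds.sub (signtend 0)).add (hVT 0)).div_const 2
    convert h3 using 2
    rw [hL]; ring
  have Tbound : ∀ j, |T j| ≤ 1 := by
    intro j
    have hb : ∀ N, |V (j+1) N| ≤ 1 := by
      intro N
      calc |V (j+1) N| ≤ ∑ n ∈ Finset.range N, |(-1:ℝ)^n * b (j+1) n| :=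
            Finset.abs_sum_le_sum_abs _ _
        _ = ∑ n ∈ Finset.range N, b (j+1) n := by
            apply Finset.sum_congr rfl
            intro n _
            exact congrFun (habs (j+1)) n
        _ = b j 0 - b j N := tele j N
        _ ≤ 1 := by have h1 := hpos j N; have h2 := hb00 j; linarith
    exact le_of_tendsto (hVT j).abs (Eventually.of_forall hb)
  have chain : ∀ J, L = (∑ k ∈ Finset.range (J+1), b k 0 * (1/2:ℝ)^(k+1)) + T J * (1/2:ℝ)^(J+1) := by
    intro J
    induction J with
    | zero => rw [Finset.sum_range_one, hL]; ring
    | succ J ih =>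
        rw [Finset.sum_range_succ, ih]
        have := Trec J
        have hpow : (1/2:ℝ)^(J+1+1) = (1/2:ℝ)^(J+1) * (1/2) := pow_succ _ _
        rw [hpow]
        linarith [mul_le_mul_of_nonneg_right (le_refl (2 * T J)) (le_of_lt (pow_pos (by norm_num : (0:ℝ) < 1/2) (J+1))),
      (by nlinarith [Trec J, pow_pos (by norm_num : (0:ℝ) < 1/2) (J+1)] :
        T J * ((1/2:ℝ)^(J+1)) = b (J+1) 0 * ((1/2:ℝ)^(J+1) * (1/2)) + T (J+1) * ((1/2:ℝ)^(J+1) * (1/2)))]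
  have summable_f : Summable (fun k => b k 0 * (1/2:ℝ)^(k+1)) := by
    apply Summable.of_nonneg_of_le
        (fun k => mul_nonneg (hpos k 0) (by positivity))
        (fun k => mul_le_of_le_one_left (by positivity) (hb00 k))
    have : Summable (fun k : ℕ => (1/2:ℝ)^k) := summable_geometric_two
    have h2 := this.mul_right (1/2:ℝ)
    apply h2.congr
    intro k
    rw [pow_succ]
  have hrem : Tendsto (fun J => T J * (1/2:ℝ)^(J+1)) atTop (nhds 0) := by
    have hgeo : Tendsto (fun J : ℕ => ((fun k : ℕ => (1/2:ℝ)^k) ∘ (fun a => a + 1)) J) atTop (nhds 0) :=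
      (tendsto_pow_atTop_nhds_zero_of_lt_one (by norm_num : (0:ℝ) ≤ 1/2)
        (by norm_num : (1/2:ℝ) < 1)).comp (tendsto_add_atTop_nat 1)
    apply squeeze_zero_norm _ hgeo
    intro J
    rw [Real.norm_eq_abs, abs_mul, abs_pow, abs_of_nonneg (by norm_num : (0:ℝ) ≤ 1/2)]
    calc |T J| * (1/2:ℝ)^(J+1) ≤ 1 * (1/2:ℝ)^(J+1) :=
          mul_le_mul_of_nonneg_right (Tbound J) (by positivity)
      _ = ((fun k : ℕ => (1/2:ℝ)^k) ∘ (fun a => a + 1)) J := by simp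
  have hpart : Tendsto (fun J => ∑ k ∈ Finset.range (J+1), b k 0 * (1/2:ℝ)^(k+1)) atTop
      (nhds (∑' k, b k 0 * (1/2:ℝ)^(k+1))) :=
    summable_f.hasSum.tendsto_sum_nat.comp (tendsto_add_atTop_nat 1)
  have hpart2 : Tendsto (fun J => ∑ k ∈ Finset.range (J+1), b k 0 * (1/2:ℝ)^(k+1)) atTop (nhds L) := by
    have heq : (fun J => ∑ k ∈ Finset.range (J+1), b k 0 * (1/2:ℝ)^(k+1))
        = fun J => L - T J * (1/2:ℝ)^(J+1) := by
      funext J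
      rw [chain J]; ring
    rw [heq]
    have h5 : Tendsto (fun J => L - T J * (1/2:ℝ)^(J+1)) atTop (nhds (L - 0)) :=
      tendsto_const_nhds.sub hrem
    rw [sub_zero] at h5
    exact h5
  have : L = ∑' k, b k 0 * (1/2:ℝ)^(k+1) := tendsto_nhds_unique hpart2 hpart
  rw [← this]
  exact hV0


lemma Pd_def (g : ℕ → ℝ) (n x : ℕ) :
    Pd g n x = ∑ i ∈ Finset.range (n+1), (-1:ℝ)^i * (n.choose i : ℝ) * g (x+i) := rfl

lemma link (m n : ℕ) :
    ((n:ℝ)+1) * Pd (fun k => (1/((k:ℝ)+1))^(m+1)) n 0 = Abin m (n+1) := by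
  rw [Pd_def, Abin, Finset.mul_sum]
  apply Finset.sum_congr rfl
  intro k hk
  simp only [Nat.zero_add]
  have hc : ((n+1) : ℕ) * n.choose k = ((n+1).choose (k+1)) * (k+1) := Nat.add_one_mul_choose_eq n k
  have hcr : ((n:ℝ)+1) * (n.choose k : ℝ) = ((n+1).choose (k+1) : ℝ) * ((k:ℝ)+1) := by
    exact_mod_cast hc
  have hk1 : ((k:ℝ)+1) ≠ 0 := by positivity
  have hpow : (1/((k:ℝ)+1))^(m+1) = (1/((k:ℝ)+1))^m * (1/((k:ℝ)+1)) := pow_succ _ _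
  rw [hpow]
  set u := (1/((k:ℝ)+1))^m with hu
  have hd : (1/((k:ℝ)+1)) * ((k:ℝ)+1) = 1 := by field_simp
  linear_combination ((-1:ℝ)^k * u * (1/((k:ℝ)+1))) * hcr + ((-1:ℝ)^k * u * ((n+1).choose (k+1) : ℝ)) * hd

end St11

open St11 in
theorem stmt11 (m : ℕ) (hm : 1 ≤ m) :
    Tendsto (fun N => ∑ n ∈ Finset.range N, (-1 : ℝ) ^ n * Y m (n + 1) / ((n : ℝ) + 1))
      atTop (nhds ((m.factorial : ℝ) * Li (m + 1) (1/2))) := by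
  have hpos : ∀ j n : ℕ, 0 ≤ Pd (fun k => (1/((k:ℝ)+1))^(m+1)) n j :=
    fun j n => Pd_pow_nonneg m n j
  have hpas : ∀ j n : ℕ, Pd (fun k => (1/((k:ℝ)+1))^(m+1)) (n+1) j
      = Pd (fun k => (1/((k:ℝ)+1))^(m+1)) n j - Pd (fun k => (1/((k:ℝ)+1))^(m+1)) n (j+1) :=
    fun j n => Pd_succ _ n j
  have hbj0 : ∀ j : ℕ, Pd (fun k => (1/((k:ℝ)+1))^(m+1)) 0 j = (1/((j:ℝ)+1))^(m+1) :=
    fun j => Pd_zero _ j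
  have hb00 : ∀ j : ℕ, Pd (fun k => (1/((k:ℝ)+1))^(m+1)) 0 j ≤ 1 := by
    intro j
    rw [hbj0 j]
    apply pow_le_one₀
    · positivity
    · rw [div_le_one (by positivity)]
      have : (0:ℝ) ≤ (j:ℝ) := Nat.cast_nonneg j
      linarith
  have hPdeq : ∀ n : ℕ, Pd (fun k => (1/((k:ℝ)+1))^(m+1)) n 0 = hp m (n+1) / ((n:ℝ)+1) := by
    intro n
    rw [eq_div_iff (by positivity : ((n:ℝ)+1) ≠ 0), mul_comm, link m n, Abin_eq_hp]
  have hb0tend : Tendsto (fun n => Pd (fun k => (1/((k:ℝ)+1))^(m+1)) n 0) atTop (nhds 0) := by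
    have h2 := (hp_div_tendsto m).comp (tendsto_add_atTop_nat 1)
    apply h2.congr
    intro n
    simp only [Function.comp_apply]
    rw [hPdeq n]
    push_cast
    rfl
  have main := main_conv (fun j n => Pd (fun k => (1/((k:ℝ)+1))^(m+1)) n j)
    hpos hpas hb00 hb0tend
  have hfun : (fun N => ∑ n ∈ Finset.range N, (-1 : ℝ) ^ n * Y m (n + 1) / ((n : ℝ) + 1))
      = fun N => (m.factorial : ℝ)
          * ∑ n ∈ Finset.range N, (-1:ℝ)^n * Pd (fun k => (1/((k:ℝ)+1))^(m+1)) n 0 := by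
    funext N
    rw [Finset.mul_sum]
    apply Finset.sum_congr rfl
    intro n _
    have hY : Y m (n+1) = (m.factorial:ℝ) * (((n:ℝ)+1) * Pd (fun k => (1/((k:ℝ)+1))^(m+1)) n 0) := by
      rw [Y_eq_hp m (n+1), ← Abin_eq_hp m n, ← link m n]
    rw [hY]
    have hn : ((n:ℝ)+1) ≠ 0 := by positivity
    field_simp
  have hLi : (m.factorial : ℝ) * Li (m+1) (1/2)
      = (m.factorial : ℝ) * ∑' k : ℕ, Pd (fun k' => (1/((k':ℝ)+1))^(m+1)) 0 k * (1/2:ℝ)^(k+1) := by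
    congr 1
    rw [Li, if_neg (by omega : ¬ (m+1 = 1))]
    apply tsum_congr
    intro k
    rw [hbj0 k, div_pow, one_pow]
    have h1 : ((k:ℝ)+1)^(m+1) ≠ 0 := by positivity
    have h2 : ((1:ℝ)/2)^(k+1) ≠ 0 := by positivity
    rw [one_div_pow]
    generalize ((k:ℝ)+1)^(m+1) = t at h1 ⊢
    ring
  rw [hfun, hLi]
  exact main.const_mul _
end

section
/- For real x with |x| < 1: ∑_{n=1}^∞ (H_n^{(2)}/n) xⁿ = 3 Li₃(x) − ln(1−x)·Li₂(x) − 2 ∑_{n=1}^∞ (H_n/n²) xⁿ. -/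
open Real Filter

lemma key (x : ℝ) (n : ℕ) :
    ∑ p ∈ Finset.HasAntidiagonal.antidiagonal n,
        (x ^ (p.1 + 1) / ((p.1 : ℝ) + 1)) * (x ^ (p.2 + 1) / ((p.2 : ℝ) + 1) ^ 2)
      = x ^ (n + 2) * (H 2 (n + 1) / ((n : ℝ) + 2) + 2 * H 1 (n + 1) / ((n : ℝ) + 2) ^ 2) := by
  rw [Finset.Nat.sum_antidiagonal_eq_sum_range_succ_mk]
  have step : ∀ k ∈ Finset.range (n + 1),
      (x ^ (k + 1) / ((k : ℝ) + 1)) * (x ^ ((n - k) + 1) / (((n - k : ℕ) : ℝ) + 1) ^ 2)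
        = x ^ (n + 2) * (1 / (((n : ℝ) + 2) * (((n - k : ℕ) : ℝ) + 1) ^ 2))
          + x ^ (n + 2) * (1 / (((n : ℝ) + 2) ^ 2 * ((k : ℝ) + 1)))
          + x ^ (n + 2) * (1 / (((n : ℝ) + 2) ^ 2 * (((n - k : ℕ) : ℝ) + 1))) := by
    intro k hk
    rw [Finset.mem_range] at hk
    have hkn : k ≤ n := by omega
    have hpow : x ^ (k + 1) * x ^ ((n - k) + 1) = x ^ (n + 2) := by
      rw [← pow_add]; congr 1; omega
    set a : ℝ := (k : ℝ) + 1 with ha_def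
    set b : ℝ := ((n - k : ℕ) : ℝ) + 1 with hb_def
    have ha : (0:ℝ) < a := by positivity
    have hb : (0:ℝ) < b := by positivity
    have habk : ((n : ℝ) + 2) = a + b := by
      rw [ha_def, hb_def]
      have hc : ((n - k : ℕ) : ℝ) = (n : ℝ) - k := by push_cast [hkn]; ring
      rw [hc]; ring
    rw [habk, ← hpow]
    field_simp
    ring
  rw [Finset.sum_congr rfl step]
  rw [Finset.sum_add_distrib, Finset.sum_add_distrib]
  have reflect2 := Finset.sum_range_reflect
    (fun k => x ^ (n + 2) * (1 / (((n : ℝ) + 2) * ((k : ℝ) + 1) ^ 2))) (n + 1)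
  have reflect1 := Finset.sum_range_reflect
    (fun k => x ^ (n + 2) * (1 / (((n : ℝ) + 2) ^ 2 * ((k : ℝ) + 1)))) (n + 1)
  simp only [Nat.add_sub_cancel] at reflect2 reflect1
  have e1 : ∑ k ∈ Finset.range (n + 1),
      x ^ (n + 2) * (1 / (((n : ℝ) + 2) * (((n - k : ℕ) : ℝ) + 1) ^ 2))
      = x ^ (n + 2) * (H 2 (n + 1) / ((n : ℝ) + 2)) := by
    rw [reflect2, H, Finset.sum_div, Finset.mul_sum]
    apply Finset.sum_congr rfl
    intro k _
    rw [div_div]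
    ring
  have e2 : ∑ k ∈ Finset.range (n + 1),
      x ^ (n + 2) * (1 / (((n : ℝ) + 2) ^ 2 * ((k : ℝ) + 1)))
      = x ^ (n + 2) * (H 1 (n + 1) / ((n : ℝ) + 2) ^ 2) := by
    rw [H, Finset.sum_div, Finset.mul_sum]
    apply Finset.sum_congr rfl
    intro k _
    rw [pow_one, div_div]
    ring
  have e3 : ∑ k ∈ Finset.range (n + 1),
      x ^ (n + 2) * (1 / (((n : ℝ) + 2) ^ 2 * (((n - k : ℕ) : ℝ) + 1)))
      = x ^ (n + 2) * (H 1 (n + 1) / ((n : ℝ) + 2) ^ 2) := by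
    rw [reflect1, H, Finset.sum_div, Finset.mul_sum]
    apply Finset.sum_congr rfl
    intro k _
    rw [pow_one, div_div]
    ring
  rw [e1, e2, e3]
  ring

lemma summable_aux_s16 {x : ℝ} (hx : |x| < 1) {f : ℕ → ℝ}
    (hf : ∀ n, |f n| ≤ |x| ^ (n + 1)) : Summable f := by
  have hgeo : Summable fun n : ℕ => |x| ^ (n + 1) := by
    simpa [pow_succ, mul_comm] using
      (summable_geometric_of_lt_one (abs_nonneg x) hx).mul_left |x|
  refine Summable.of_norm ?_
  refine Summable.of_nonneg_of_le (fun n => norm_nonneg _) (fun n => ?_) hgeo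
  simpa [Real.norm_eq_abs] using hf n

theorem stmt16 (x : ℝ) (hx : |x| < 1) :
    ∑' n : ℕ, H 2 (n + 1) / ((n : ℝ) + 1) * x ^ (n + 1)
      = 3 * Li 3 x - Real.log (1 - x) * Li 2 x
        - 2 * ∑' n : ℕ, H 1 (n + 1) / ((n : ℝ) + 1) ^ 2 * x ^ (n + 1) := by
  have hcast : ∀ n : ℕ, ((n : ℝ) + 1) = ((n + 1 : ℕ) : ℝ) := by intro n; push_cast; ring
  -- Summabilities
  have hS : Summable (fun n : ℕ => H 2 (n + 1) / ((n : ℝ) + 1) * x ^ (n + 1)) := by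
    apply summable_aux_s16 hx
    intro n
    rw [abs_mul, abs_pow, abs_of_nonneg (div_nonneg (H_nonneg _ _) (by positivity))]
    apply mul_le_of_le_one_left (pow_nonneg (abs_nonneg x) _)
    rw [div_le_one (by positivity)]
    have := H_le 2 (n + 1); push_cast at this ⊢; linarith
  have hT : Summable (fun n : ℕ => H 1 (n + 1) / ((n : ℝ) + 1) ^ 2 * x ^ (n + 1)) := by
    apply summable_aux_s16 hx
    intro n
    rw [abs_mul, abs_pow, abs_of_nonneg (div_nonneg (H_nonneg _ _) (by positivity))]
    apply mul_le_of_le_one_left (pow_nonneg (abs_nonneg x) _)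
    rw [div_le_one (by positivity)]
    have h1 := H_le 1 (n + 1)
    have h2 : ((n + 1 : ℕ) : ℝ) ≤ ((n : ℝ) + 1) ^ 2 := by
      push_cast
      nlinarith [Nat.cast_nonneg (α := ℝ) n]
    push_cast at h1 h2 ⊢; linarith
  have hC : Summable (fun n : ℕ => x ^ (n + 1) / ((n : ℝ) + 1) ^ 3) := by
    apply summable_aux_s16 hx
    intro n
    rw [abs_div, abs_pow, abs_pow]
    have h1 : (1:ℝ) ≤ |(n : ℝ) + 1| ^ 3 := by
      apply one_le_pow₀
      rw [abs_of_nonneg (by positivity)]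
      have := Nat.cast_nonneg (α := ℝ) n; linarith
    calc |x| ^ (n+1) / |(n : ℝ) + 1| ^ 3 ≤ |x| ^ (n+1) / 1 :=
          div_le_div_of_nonneg_left (by positivity) one_pos h1
      _ = |x| ^ (n+1) := div_one _
  have hA : Summable fun n : ℕ => ‖x ^ (n + 1) / ((n : ℝ) + 1)‖ := by
    apply summable_aux_s16 hx
    intro n
    rw [abs_norm, Real.norm_eq_abs, abs_div, abs_pow]
    have h1 : (1:ℝ) ≤ |(n : ℝ) + 1| := by
      rw [abs_of_nonneg (by positivity)]
      have := Nat.cast_nonneg (α := ℝ) n; linarith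
    calc |x| ^ (n+1) / |(n : ℝ) + 1| ≤ |x| ^ (n+1) / 1 :=
          div_le_div_of_nonneg_left (by positivity) one_pos h1
      _ = |x| ^ (n+1) := div_one _
  have hB : Summable fun n : ℕ => ‖x ^ (n + 1) / ((n : ℝ) + 1) ^ 2‖ := by
    apply summable_aux_s16 hx
    intro n
    rw [abs_norm, Real.norm_eq_abs, abs_div, abs_pow, abs_pow]
    have h1 : (1:ℝ) ≤ |(n : ℝ) + 1| ^ 2 := by
      apply one_le_pow₀
      rw [abs_of_nonneg (by positivity)]
      have := Nat.cast_nonneg (α := ℝ) n; linarith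
    calc |x| ^ (n+1) / |(n : ℝ) + 1| ^ 2 ≤ |x| ^ (n+1) / 1 :=
          div_le_div_of_nonneg_left (by positivity) one_pos h1
      _ = |x| ^ (n+1) := div_one _
  -- Cauchy product
  have hab := tsum_mul_tsum_eq_tsum_sum_antidiagonal_of_summable_norm hA hB
  have hlog : (∑' n : ℕ, x ^ (n + 1) / ((n : ℝ) + 1)) = -Real.log (1 - x) :=
    (Real.hasSum_pow_div_log_of_abs_lt_one hx).tsum_eq
  have hLi2 : Li 2 x = ∑' n : ℕ, x ^ (n + 1) / ((n : ℝ) + 1) ^ 2 := by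
    rw [Li]; norm_num
  have hLi3 : Li 3 x = ∑' n : ℕ, x ^ (n + 1) / ((n : ℝ) + 1) ^ 3 := by
    rw [Li]; norm_num
  -- The shifted combination
  set F : ℕ → ℝ := fun m => H 2 (m + 1) / ((m : ℝ) + 1) * x ^ (m + 1)
      + 2 * (H 1 (m + 1) / ((m : ℝ) + 1) ^ 2 * x ^ (m + 1))
      - 3 * (x ^ (m + 1) / ((m : ℝ) + 1) ^ 3) with hF_def
  have hF0 : F 0 = 0 := by
    simp [hF_def, H, Finset.sum_range_one]
    ring
  have hFs : Summable F := (hS.add (hT.mul_left 2)).sub (hC.mul_left 3)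
  have hFshift : ∀ n : ℕ,
      x ^ (n + 2) * (H 2 (n + 1) / ((n : ℝ) + 2) + 2 * H 1 (n + 1) / ((n : ℝ) + 2) ^ 2)
      = F (n + 1) := by
    intro n
    have h2s : H 2 (n + 2) = H 2 (n + 1) + 1 / ((n : ℝ) + 2) ^ 2 := by
      rw [H, Finset.sum_range_succ, ← H]; push_cast; ring
    have h1s : H 1 (n + 2) = H 1 (n + 1) + 1 / ((n : ℝ) + 2) := by
      rw [H, Finset.sum_range_succ, ← H]; push_cast; ring
    simp only [hF_def]
    push_cast
    rw [show (n:ℝ) + 1 + 1 = (n:ℝ) + 2 by ring, h2s, h1s]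
    have hne : ((n : ℝ) + 2) ≠ 0 := by positivity
    field_simp
    ring
  -- chain
  have hchain : -Real.log (1 - x) * Li 2 x = ∑' n : ℕ, F (n + 1) := by
    rw [hLi2, ← hlog, hab]
    apply tsum_congr
    intro n
    rw [key x n, hFshift n]
  have hsplit : ∑' m, F m = (∑' n : ℕ, H 2 (n + 1) / ((n : ℝ) + 1) * x ^ (n + 1))
      + 2 * (∑' n : ℕ, H 1 (n + 1) / ((n : ℝ) + 1) ^ 2 * x ^ (n + 1))
      - 3 * (∑' n : ℕ, x ^ (n + 1) / ((n : ℝ) + 1) ^ 3) := by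
    rw [hF_def, Summable.tsum_sub (hS.add (hT.mul_left 2)) (hC.mul_left 3),
      Summable.tsum_add hS (hT.mul_left 2), tsum_mul_left, tsum_mul_left]
  have hzero : ∑' m, F m = ∑' n : ℕ, F (n + 1) := by
    rw [Summable.tsum_eq_zero_add hFs, hF0, zero_add]
  rw [hLi3]
  have := hchain
  rw [← hzero, hsplit] at this
  linarith
end

section
/- For real x with |x| < 1: ∑_{n=1}^∞ (1/n²)·(∑_{k=1}^n x^k/k) = 2 ∑_{n=1}^∞ (H_n/n²) xⁿ + ln(1−x)·Li₂(x) − 2 Li₃(x) − ζ(2)·ln(1−x). -/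
open Real Filter

lemma one_le_cpow (j m : ℕ) : (1:ℝ) ≤ ((j:ℝ)+1)^m :=
  one_le_pow₀ (by linarith [Nat.cast_nonneg (α := ℝ) j])

lemma sum2 : Summable (fun n : ℕ => 1 / ((n:ℝ)+1) ^ 2) := by
  have h1 : Summable (fun n : ℕ => 1/((n:ℝ))^2) := Real.summable_one_div_nat_pow.mpr one_lt_two
  have := (summable_nat_add_iff 1).mpr h1
  exact this.congr (by intro n; push_cast; ring_nf)

section main
variable {x : ℝ} (hx : |x| < 1)

lemma geo (hx : |x| < 1) : Summable (fun n : ℕ => |x|^(n+1)) := by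
  have h := summable_geometric_of_lt_one (abs_nonneg x) hx
  exact (summable_nat_add_iff 1).mpr h

include hx

lemma sum_pow (p : ℕ) : Summable (fun n : ℕ => x^(n+1) / ((n:ℝ)+1)^p) := by
  apply Summable.of_norm_bounded (geo hx)
  intro n
  have h0 : (0:ℝ) < (n:ℝ)+1 := by positivity
  simp only [Real.norm_eq_abs, abs_div, abs_pow]
  rw [abs_of_pos h0]
  exact div_le_self (by positivity) (one_le_cpow _ _)

lemma sum_H1 : Summable (fun n : ℕ => H 1 (n+1) / ((n:ℝ)+1)^2 * x^(n+1)) := by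
  apply Summable.of_norm_bounded (geo hx)
  intro n
  have h0 : (0:ℝ) < (n:ℝ)+1 := by positivity
  simp only [Real.norm_eq_abs, abs_mul, abs_div, abs_pow]
  rw [abs_of_pos h0, abs_of_nonneg (H_nonneg 1 (n+1))]
  apply mul_le_of_le_one_left (by positivity)
  rw [div_le_one (by positivity)]
  calc H 1 (n+1) ≤ ((n+1 : ℕ):ℝ) := H_le 1 (n+1)
    _ ≤ ((n:ℝ)+1)^2 := by push_cast; nlinarith [Nat.cast_nonneg (α := ℝ) n]

lemma sum_wH2 : Summable (fun k : ℕ => x^(k+1) / ((k:ℝ)+1) * H 2 k) := by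
  apply Summable.of_norm_bounded (geo hx)
  intro k
  have h0 : (0:ℝ) < (k:ℝ)+1 := by positivity
  simp only [Real.norm_eq_abs, abs_mul, abs_div, abs_pow]
  rw [abs_of_pos h0, abs_of_nonneg (H_nonneg 2 k)]
  rw [div_mul_eq_mul_div, div_le_iff₀ h0]
  have h1 : H 2 k ≤ (k:ℝ)+1 := le_trans (H_le 2 k) (by linarith)
  calc |x|^(k+1) * H 2 k ≤ |x|^(k+1) * ((k:ℝ)+1) := by
        apply mul_le_mul_of_nonneg_left h1 (by positivity)
    _ = |x|^(k+1) * ((k:ℝ)+1) := rfl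

omit hx in
/-- partial fractions -/
lemma pf {a b : ℝ} (ha : 0 < a) (hb : 0 < b) :
    1/(a*b^2) = 1/((a+b)*b^2) + 1/((a+b)^2*a) + 1/((a+b)^2*b) := by
  have h1 : a ≠ 0 := ne_of_gt ha
  have h2 : b ≠ 0 := ne_of_gt hb
  have h3 : a + b ≠ 0 := by positivity
  field_simp
  ring

omit hx in
/-- the finite coefficient identity -/
lemma fin_id (m : ℕ) :
    ∑ kl ∈ Finset.HasAntidiagonal.antidiagonal m, (x^(kl.1+1) / ((kl.1:ℝ)+1)) * (x^(kl.2+1) / ((kl.2:ℝ)+1)^2)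
      = x^(m+2) * (H 2 (m+1) / ((m:ℝ)+2) + 2 * H 1 (m+1) / ((m:ℝ)+2)^2) := by
  rw [Finset.Nat.sum_antidiagonal_eq_sum_range_succ_mk]
  have h3 : ((m:ℝ)+2) ≠ 0 := by positivity
  have key : ∀ i ∈ Finset.range (m+1),
      (x^(i+1) / ((i:ℝ)+1)) * (x^((m-i)+1) / (((m-i:ℕ):ℝ)+1)^2)
        = (x^(m+2)/((m:ℝ)+2)) * (1/(((m-i:ℕ):ℝ)+1)^2)
          + ((x^(m+2)/((m:ℝ)+2)^2) * (1/((i:ℝ)+1))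
          + (x^(m+2)/((m:ℝ)+2)^2) * (1/(((m-i:ℕ):ℝ)+1))) := by
    intro i hi
    rw [Finset.mem_range] at hi
    have hi' : i ≤ m := Nat.lt_succ_iff.mp hi
    have hpow : x^(i+1) * x^((m-i)+1) = x^(m+2) := by
      rw [← pow_add]; congr 1; omega
    have hsum : ((i:ℝ)+1) + (((m-i:ℕ):ℝ)+1) = (m:ℝ)+2 := by
      rw [Nat.cast_sub hi']; ring
    set a : ℝ := (i:ℝ)+1 with hadef
    set b : ℝ := ((m-i:ℕ):ℝ)+1 with hbdef
    have ha : 0 < a := by positivity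
    have hb : 0 < b := by positivity
    have hpf := pf ha hb
    rw [hsum] at hpf
    rw [div_mul_div_comm, hpow, div_eq_mul_one_div, hpf]
    field_simp
    ring
  rw [Finset.sum_congr rfl key]
  rw [Finset.sum_add_distrib, Finset.sum_add_distrib, ← Finset.mul_sum, ← Finset.mul_sum,
    ← Finset.mul_sum]
  have r2 : ∑ i ∈ Finset.range (m+1), (1:ℝ)/(((m-i:ℕ):ℝ)+1)^2 = H 2 (m+1) := by
    rw [H, ← Finset.sum_range_reflect (fun j => (1:ℝ)/((j:ℝ)+1)^2) (m+1)]
    exact Finset.sum_congr rfl (fun i _ => by norm_num)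
  have r1 : ∑ i ∈ Finset.range (m+1), (1:ℝ)/(((m-i:ℕ):ℝ)+1) = H 1 (m+1) := by
    rw [H, ← Finset.sum_range_reflect (fun j => (1:ℝ)/((j:ℝ)+1)^1) (m+1)]
    exact Finset.sum_congr rfl (fun i _ => by norm_num)
  have r0 : ∑ i ∈ Finset.range (m+1), (1:ℝ)/((i:ℝ)+1) = H 1 (m+1) := by
    rw [H]
    exact Finset.sum_congr rfl (fun i _ => by norm_num)
  rw [r2, r1, r0]
  ring

set_option maxHeartbeats 1000000 in
lemma swapA : ∑' n : ℕ, (1/((n:ℝ)+1)^2 * ∑ k ∈ Finset.range (n+1), x^(k+1)/((k:ℝ)+1))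
    = ∑' k : ℕ, (x^(k+1)/((k:ℝ)+1)) * (zt 2 - H 2 k) := by
  set g : ℕ → ℕ → ℝ :=
    fun n k => if k ≤ n then 1/((n:ℝ)+1)^2 * (x^(k+1)/((k:ℝ)+1)) else 0 with hg
  have hb : Summable (fun p : ℕ×ℕ => (1/((p.1:ℝ)+1)^2) * |x|^(p.2+1)) :=
    Summable.mul_of_nonneg sum2 (geo hx) (Pi.le_def.mpr (fun n => by positivity))
      (Pi.le_def.mpr (fun n => by positivity))
  have hgs : Summable (Function.uncurry g) := by
    apply Summable.of_norm_bounded hb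
    rintro ⟨n, k⟩
    simp only [Function.uncurry, hg]
    split_ifs with h
    · have h0 : (0:ℝ) < (k:ℝ)+1 := by positivity
      have h1 : (0:ℝ) < (n:ℝ)+1 := by positivity
      simp only [Real.norm_eq_abs, abs_mul, abs_div, abs_one, abs_pow]
      rw [abs_of_pos h0, abs_of_pos h1]
      apply mul_le_mul_of_nonneg_left _ (by positivity)
      exact div_le_self (by positivity) (by linarith [Nat.cast_nonneg (α := ℝ) k])
    · simp only [norm_zero]; positivity
  have hrow : ∀ n, Summable (g n) := by
    intro n
    apply summable_of_ne_finset_zero (s := Finset.range (n+1))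
    intro k hk
    rw [Finset.mem_range] at hk
    exact if_neg (by omega)
  have hcol : ∀ k, Summable (fun n => g n k) := by
    intro k
    apply Summable.of_norm_bounded (sum2.mul_right (|x|^(k+1) / ((k:ℝ)+1)))
    intro n
    simp only [hg]
    split_ifs with h
    · have h0 : (0:ℝ) < (k:ℝ)+1 := by positivity
      have h1 : (0:ℝ) < (n:ℝ)+1 := by positivity
      simp only [Real.norm_eq_abs, abs_mul, abs_div, abs_one, abs_pow]
      rw [abs_of_pos h0, abs_of_pos h1]
    · simp only [norm_zero]; positivity
  calc ∑' n : ℕ, (1/((n:ℝ)+1)^2 * ∑ k ∈ Finset.range (n+1), x^(k+1)/((k:ℝ)+1))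
      = ∑' n, ∑' k, g n k := by
        apply tsum_congr
        intro n
        rw [tsum_eq_sum (s := Finset.range (n+1))
          (fun k hk => if_neg (by rw [Finset.mem_range] at hk; omega)), Finset.mul_sum]
        apply Finset.sum_congr rfl
        intro k hk
        rw [Finset.mem_range] at hk
        rw [if_pos (by omega : k ≤ n)]
    _ = ∑' k, ∑' n, g n k := (Summable.tsum_comm' hgs hrow hcol).symm
    _ = ∑' k : ℕ, (x^(k+1)/((k:ℝ)+1)) * (zt 2 - H 2 k) := by
        apply tsum_congr
        intro k
        have hgk : ∀ n, g n k = (if k ≤ n then 1/((n:ℝ)+1)^2 else 0) * (x^(k+1)/((k:ℝ)+1)) := by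
          intro n
          simp only [hg]
          split_ifs with h
          · rfl
          · ring
        rw [tsum_congr hgk, tsum_mul_right]
        have ha' : Summable (fun n => if k ≤ n then 1/((n:ℝ)+1)^2 else 0) := by
          apply Summable.of_norm_bounded sum2
          intro n
          split_ifs with h
          · rw [Real.norm_eq_abs, abs_of_nonneg (by positivity)]
          · simp only [norm_zero]; positivity
        have e4 : ∑ i ∈ Finset.range k, (if k ≤ i then 1/((i:ℝ)+1)^2 else 0) = 0 :=
          Finset.sum_eq_zero (fun i hi => if_neg (by rw [Finset.mem_range] at hi; omega))
        have e2 : (∑' n : ℕ, if k ≤ n then 1/((n:ℝ)+1)^2 else 0)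
            = ∑' i : ℕ, 1/(((i+k:ℕ):ℝ)+1)^2 := by
          rw [← Summable.sum_add_tsum_nat_add k ha', e4, zero_add]
          exact tsum_congr (fun i => if_pos (Nat.le_add_left k i))
        have e3 : H 2 k + (∑' i : ℕ, 1/(((i+k:ℕ):ℝ)+1)^2) = zt 2 :=
          Summable.sum_add_tsum_nat_add k sum2
        have e8 : (∑' n : ℕ, if k ≤ n then 1/((n:ℝ)+1)^2 else 0) = zt 2 - H 2 k := by
          rw [e2]; linarith
        rw [e8]
        ring

lemma sum_pow_norm (p : ℕ) : Summable (fun n : ℕ => ‖x^(n+1) / ((n:ℝ)+1)^p‖) := by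
  have h' : |(|x|)| < 1 := by rwa [abs_abs]
  apply (sum_pow h' p).congr
  intro n
  have h1 : (0:ℝ) < (n:ℝ)+1 := by positivity
  rw [Real.norm_eq_abs, abs_div, abs_pow, abs_pow, abs_of_pos h1]

lemma cauchy : ∑' k : ℕ, x^(k+1)/((k:ℝ)+1) * H 2 k
    = -Real.log (1-x) * (∑' n : ℕ, x^(n+1)/((n:ℝ)+1)^2)
      - 2*(∑' n : ℕ, H 1 (n+1)/((n:ℝ)+1)^2 * x^(n+1))
      + 2*(∑' n : ℕ, x^(n+1)/((n:ℝ)+1)^3) := by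
  set d : ℕ → ℝ := fun n => 2*(H 1 (n+1)/((n:ℝ)+1)^2 * x^(n+1))
    + x^(n+1)/((n:ℝ)+1) * H 2 n - 2*(x^(n+1)/((n:ℝ)+1)^3) with hd
  have hA := sum_H1 hx
  have hW := sum_wH2 hx
  have h3 := sum_pow hx 3
  have hds : Summable d := ((hA.mul_left 2).add hW).sub (h3.mul_left 2)
  have hd0 : d 0 = 0 := by simp [hd, H]
  have hsucc : ∀ m, d (m+1) = ∑ kl ∈ Finset.HasAntidiagonal.antidiagonal m,
      (x^(kl.1+1)/((kl.1:ℝ)+1)) * (x^(kl.2+1)/((kl.2:ℝ)+1)^2) := by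
    intro m
    rw [fin_id]
    simp only [hd]
    have hH1 : H 1 (m+1+1) = H 1 (m+1) + 1/((m:ℝ)+2) := by
      rw [H, H, Finset.sum_range_succ]; push_cast; ring
    rw [hH1]
    have hne : ((m:ℝ)+2) ≠ 0 := by positivity
    push_cast
    field_simp <;> push_cast <;> ring
  have hnw : Summable (fun n : ℕ => ‖x^(n+1)/((n:ℝ)+1)‖) :=
    (sum_pow_norm hx 1).congr (fun n => by rw [pow_one])
  have hnv := sum_pow_norm hx 2
  have key : (∑' n : ℕ, x^(n+1)/((n:ℝ)+1)) * (∑' n : ℕ, x^(n+1)/((n:ℝ)+1)^2) = ∑' n, d n := by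
    rw [tsum_mul_tsum_eq_tsum_sum_antidiagonal_of_summable_norm hnw hnv,
      Summable.tsum_eq_zero_add hds, hd0, zero_add]
    exact tsum_congr (fun m => (hsucc m).symm)
  have expand : ∑' n, d n = 2*(∑' n : ℕ, H 1 (n+1)/((n:ℝ)+1)^2 * x^(n+1))
      + (∑' k : ℕ, x^(k+1)/((k:ℝ)+1) * H 2 k) - 2*(∑' n : ℕ, x^(n+1)/((n:ℝ)+1)^3) := by
    rw [hd]
    rw [Summable.tsum_sub ((hA.mul_left 2).add hW) (h3.mul_left 2), Summable.tsum_add (hA.mul_left 2) hW,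
      tsum_mul_left, tsum_mul_left]
  have hlog := Real.hasSum_pow_div_log_of_abs_lt_one hx
  rw [hlog.tsum_eq] at key
  rw [expand] at key
  linarith

end main

theorem stmt17 (x : ℝ) (hx : |x| < 1) :
    ∑' n : ℕ, (1 / ((n : ℝ) + 1) ^ 2 * ∑ k ∈ Finset.range (n + 1), x ^ (k + 1) / ((k : ℝ) + 1))
      = 2 * (∑' n : ℕ, H 1 (n + 1) / ((n : ℝ) + 1) ^ 2 * x ^ (n + 1))
        + Real.log (1 - x) * Li 2 x - 2 * Li 3 x - zt 2 * Real.log (1 - x) := by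
  have hlog := Real.hasSum_pow_div_log_of_abs_lt_one hx
  have hw : Summable (fun k : ℕ => x^(k+1)/((k:ℝ)+1)) := hlog.summable
  have h2 : Li 2 x = ∑' n : ℕ, x^(n+1)/((n:ℝ)+1)^2 := by rw [Li]; norm_num
  have h3 : Li 3 x = ∑' n : ℕ, x^(n+1)/((n:ℝ)+1)^3 := by rw [Li]; norm_num
  rw [swapA hx]
  have hsplit : ∑' k : ℕ, (x^(k+1)/((k:ℝ)+1)) * (zt 2 - H 2 k)
      = zt 2 * (∑' k : ℕ, x^(k+1)/((k:ℝ)+1)) - ∑' k : ℕ, x^(k+1)/((k:ℝ)+1) * H 2 k := by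
    rw [← tsum_mul_left, ← Summable.tsum_sub (hw.mul_left (zt 2)) (sum_wH2 hx)]
    exact tsum_congr (fun k => by ring)
  rw [hsplit, hlog.tsum_eq, cauchy hx, h2, h3]
  ring
end
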